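/- arXiv:2102.01634 — 10 statements merged into one kernel-verified Lean document; each statement's English description precedes it below -/
import Mathlib

section
/- Let (R,*) be a ring with involution in which every left maximal ideal is a two-sided ideal. Then R is Dedekind finite: every element of R with a right inverse has a left inverse (equivalently, xy = 1 implies yx = 1). -/
/-- A ring with involution in which every left maximal ideal is
two-sided is Dedekind finite. -/
theorem stmt1 (R : Type*) [Ring R] [StarRing R]
    (hlmax : ∀ I : Ideal R, I.IsMaximal → ∀ x ∈ I, ∀ r : R, x * r ∈ I) :
    ∀ x y : R, x * y = 1 → y * x = 1 := by
  intro x y hxy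
  have h : (Ideal.span {x} : Ideal R) = ⊤ := by
    by_contra h
    obtain ⟨M, hM, hMs⟩ := Ideal.exists_le_maximal _ h
    have hx : x ∈ M := hMs (Ideal.subset_span rfl)
    have h1 : (1 : R) ∈ M := hxy ▸ hlmax M hM x hx y
    exact hM.ne_top ((Ideal.eq_top_iff_one M).mpr h1)
  have h1 : (1 : R) ∈ Ideal.span ({x} : Set R) := h ▸ Submodule.mem_top
  obtain ⟨z, hz⟩ := Submodule.mem_span_singleton.mp h1
  have hz' : z * x = 1 := hz
  have hzy : z = y := by
    calc z = z * (x * y) := by rw [hxy, mul_one]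
    _ = (z * x) * y := by rw [mul_assoc]
    _ = y := by rw [hz', one_mul]
  rw [← hzy]; exact hz'
end

section
/- Let (R,*) be an l-maximal ring with involution (every left maximal ideal is two-sided) having a unique maximal two-sided ideal 𝔰 stable under * (i.e., 𝔰* = 𝔰). Then R has at most two maximal ideals, namely some 𝔪 and 𝔪*, and 𝔰 = 𝔪 ∩ 𝔪*. -/
/-!
The star of a maximal two-sided ideal `𝔪` is again maximal, and every maximal ideal of an
l-maximal ring is prime, so `𝔪 ⊓ 𝔪*` is a proper stable ideal that any proper stable ideal
above it must equal: it is inside some maximal `𝔫`, which contains `𝔪 𝔪*` and is therefore `𝔪`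
or `𝔪*`. Uniqueness gives `𝔪 ⊓ 𝔪* = 𝔰` for every maximal `𝔪`, and a second maximal ideal `𝔮`
contains `𝔪 𝔪* ≤ 𝔰`, so `𝔮 = 𝔪` or `𝔮 = 𝔪*`.
-/

namespace Ideal

variable {R : Type*} [Ring R]

theorem IsMaximal.le_or_le_of_mul_le {M : Ideal R} [M.IsTwoSided] (hM : M.IsMaximal)
    {A B : Ideal R} (h : A * B ≤ M) : A ≤ M ∨ B ≤ M := by
  refine or_iff_not_imp_left.mpr fun hA => ?_
  have hMA : M ⊔ A = ⊤ := hM.1.2 _ (lt_of_le_of_ne le_sup_left fun h => hA (h ▸ le_sup_right))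
  calc B = (M ⊔ A) * B := by rw [hMA, top_mul]
    _ = M * B ⊔ A * B := sup_mul _ _ _
    _ ≤ M := sup_le mul_le_left h

variable [StarRing R]

/-- `{x | x* ∈ I}` is a left ideal because `I` is a right ideal. -/
def star (I : Ideal R) [I.IsTwoSided] : Ideal R where
  carrier := {x | Star.star x ∈ I}
  add_mem' {a b} ha hb := by
    simp only [Set.mem_ofPred_eq, star_add] at ha hb ⊢
    exact I.add_mem ha hb
  zero_mem' := by simp
  smul_mem' r x hx := by
    simp only [Set.mem_ofPred_eq, smul_eq_mul, star_mul] at hx ⊢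
    exact IsTwoSided.mul_mem_of_left _ hx

section Star

variable (I J : Ideal R) [I.IsTwoSided] [J.IsTwoSided]

@[simp]
theorem mem_star {x : R} : x ∈ I.star ↔ Star.star x ∈ I := Iff.rfl

instance isTwoSided_star : I.star.IsTwoSided :=
  ⟨fun b ha => by simpa [star_mul] using I.mul_mem_left (Star.star b) ha⟩

@[simp]
theorem star_star : I.star.star = I := by
  ext x
  simp

theorem star_le_iff_le_star : I.star ≤ J ↔ I ≤ J.star :=
  ⟨fun h x hx => h (by simpa using hx), fun h x hx => by simpa using h hx⟩

@[simp]
theorem star_eq_top_iff : I.star = ⊤ ↔ I = ⊤ := by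
  simp [eq_top_iff_one]

theorem mem_inf_star {x : R} : x ∈ I ⊓ I.star ↔ x ∈ I ∧ Star.star x ∈ I := Iff.rfl

theorem inf_star_ne_top (hI : I ≠ ⊤) : I ⊓ I.star ≠ ⊤ :=
  ne_top_of_le_ne_top hI inf_le_left

theorem mem_inf_star_iff_star_mem (x : R) : x ∈ I ⊓ I.star ↔ Star.star x ∈ I ⊓ I.star := by
  simp only [mem_inf_star, _root_.star_star, and_comm]

end Star

section LMaximal

variable (hR : ∀ I : Ideal R, I.IsMaximal → I.IsTwoSided)
include hR

theorem IsMaximal.star {M : Ideal R} [M.IsTwoSided] (hM : M.IsMaximal) : M.star.IsMaximal := by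
  refine isMaximal_def.mpr ⟨by simpa using hM.ne_top, fun J hJ => by_contra fun hJtop => ?_⟩
  obtain ⟨N, hN, hJN⟩ := exists_le_maximal J hJtop
  have := hR N hN
  have hMN : M = N.star :=
    hM.eq_of_le (by simpa using hN.ne_top) ((star_le_iff_le_star M N).mp (hJ.le.trans hJN))
  subst hMN
  exact hJ.not_ge (by simpa using hJN)

theorem IsMaximal.eq_or_eq_star_of_mul_star_le {M : Ideal R} [M.IsTwoSided] (hM : M.IsMaximal)
    {N : Ideal R} (hN : N.IsMaximal) (h : M * M.star ≤ N) : N = M ∨ N = M.star :=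
  have := hR N hN
  (hN.le_or_le_of_mul_le h).imp (fun hle => (hM.eq_of_le hN.ne_top hle).symm)
    fun hle => ((hM.star hR).eq_of_le hN.ne_top hle).symm

theorem IsMaximal.eq_inf_star_of_le {M : Ideal R} [M.IsTwoSided] (hM : M.IsMaximal)
    {K : Ideal R} (hK : K ≠ ⊤) (hK_stable : ∀ x, x ∈ K ↔ Star.star x ∈ K)
    (h : M ⊓ M.star ≤ K) : K = M ⊓ M.star := by
  obtain ⟨N, hN, hKN⟩ := exists_le_maximal K hK
  refine le_antisymm (fun x hx => ?_) h
  have hxN : x ∈ N ∧ Star.star x ∈ N := ⟨hKN hx, hKN ((hK_stable x).mp hx)⟩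
  rcases hM.eq_or_eq_star_of_mul_star_le hR hN (mul_le_inf.trans (h.trans hKN))
    with rfl | rfl
  · exact hxN
  · simpa [mem_inf_star, and_comm] using hxN

end LMaximal

end Ideal

theorem stmt2_general (R : Type*) [Ring R] [StarRing R]
    (hlmax : ∀ I : Ideal R, I.IsMaximal → ∀ x ∈ I, ∀ r : R, x * r ∈ I)
    (𝔰 : Ideal R) (hs_ne : 𝔰 ≠ ⊤)
    (hs_unique : ∀ J : Ideal R, J ≠ ⊤ → (∀ x : R, x ∈ J ↔ star x ∈ J) →
      (∀ K : Ideal R, K ≠ ⊤ → (∀ x : R, x ∈ K ↔ star x ∈ K) → J ≤ K → K = J) → J = 𝔰) :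
    ∃ 𝔪 : Ideal R, 𝔪.IsMaximal ∧
      (∀ 𝔮 : Ideal R, 𝔮.IsMaximal → 𝔮 = 𝔪 ∨ ∀ x : R, x ∈ 𝔮 ↔ star x ∈ 𝔪) ∧
      (∀ x : R, x ∈ 𝔰 ↔ x ∈ 𝔪 ∧ star x ∈ 𝔪) := by
  have hR (I : Ideal R) (hI : I.IsMaximal) : I.IsTwoSided :=
    ⟨fun r hx => hlmax I hI _ hx r⟩
  have mem_𝔰 (Q : Ideal R) (hQ : Q.IsMaximal) (x : R) : x ∈ 𝔰 ↔ x ∈ Q ∧ star x ∈ Q := by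
    have := hR Q hQ
    rw [← hs_unique _ (Ideal.inf_star_ne_top Q hQ.ne_top) (Ideal.mem_inf_star_iff_star_mem Q)
      fun K hK hK_stable => hQ.eq_inf_star_of_le hR hK hK_stable]
    exact Ideal.mem_inf_star Q
  obtain ⟨𝔪, h𝔪, -⟩ := Ideal.exists_le_maximal 𝔰 hs_ne
  have := hR 𝔪 h𝔪
  refine ⟨𝔪, h𝔪, fun 𝔮 h𝔮 => ?_, mem_𝔰 𝔪 h𝔪⟩
  have h_mul : 𝔪 * 𝔪.star ≤ 𝔮 := fun x hx =>
    ((mem_𝔰 𝔮 h𝔮 x).mp ((mem_𝔰 𝔪 h𝔪 x).mpr (Ideal.mul_le_inf hx))).1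
  exact (h𝔪.eq_or_eq_star_of_mul_star_le hR h𝔮 h_mul).imp_right fun h x => by rw [h, Ideal.mem_star]

/-- An l-maximal ring with involution having a unique stable maximal
ideal 𝔰 has at most two maximal ideals 𝔪 and 𝔪*, and 𝔰 = 𝔪 ∩ 𝔪*. -/
theorem stmt2 (R : Type*) [Ring R] [StarRing R]
    (hlmax : ∀ I : Ideal R, I.IsMaximal → ∀ x ∈ I, ∀ r : R, x * r ∈ I)
    (𝔰 : Ideal R) (hs_ne : 𝔰 ≠ ⊤)
    (hs_stable : ∀ x : R, x ∈ 𝔰 ↔ star x ∈ 𝔰)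
    (hs_max : ∀ J : Ideal R, J ≠ ⊤ → (∀ x : R, x ∈ J ↔ star x ∈ J) → 𝔰 ≤ J → J = 𝔰)
    (hs_unique : ∀ J : Ideal R, J ≠ ⊤ → (∀ x : R, x ∈ J ↔ star x ∈ J) →
      (∀ K : Ideal R, K ≠ ⊤ → (∀ x : R, x ∈ K ↔ star x ∈ K) → J ≤ K → K = J) → J = 𝔰) :
    ∃ 𝔪 : Ideal R, 𝔪.IsMaximal ∧
      (∀ 𝔮 : Ideal R, 𝔮.IsMaximal → 𝔮 = 𝔪 ∨ ∀ x : R, x ∈ 𝔮 ↔ star x ∈ 𝔪) ∧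
      (∀ x : R, x ∈ 𝔰 ↔ x ∈ 𝔪 ∧ star x ∈ 𝔪) :=
  stmt2_general R hlmax 𝔰 hs_ne hs_unique
end

section
/- Let (A,*) be a ring with involution such that the involution fixes the Jacobson radical 𝒥 setwise (𝒥* = 𝒥), inducing an involution on Ā = A/𝒥, and suppose units lift: ā ∈ Ā× implies a ∈ A×. If Ā is *-Euclidean of decomposition length n, then A is *-Euclidean of decomposition length n. -/
/-- A ring with involution is *-Euclidean of decomposition length n:
given a, c with Aa + Ac = A and star a * c symmetric (r₋₁ = a is `r 0`,
r₀ = c is `r 1`), there is a chain r_{i-1} = s_i r_i + r_{i+1} with the s_i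
symmetric, ending in a unit r_n (= `r (n+1)`). -/
def StarEuclideanLen (A : Type*) [Ring A] [StarRing A] (n : ℕ) : Prop :=
  ∀ a c : A, (∃ x y : A, x * a + y * c = 1) → star a * c = star c * a →
    ∃ r s : ℕ → A, r 0 = a ∧ r 1 = c ∧
      (∀ i < n, star (s i) = s i) ∧
      (∀ i < n, r i = s i * r (i + 1) + r (i + 2)) ∧
      IsUnit (r (n + 1))

/-- if the involution fixes the Jacobson radical setwise (so the
quotient Ā = A/𝒥, abstracted here as a surjective star-equivariant ring map π
with kernel the Jacobson radical), units lift, and there is a star-equivariant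
unit-preserving section σ, then Ā *-Euclidean of length n implies A *-Euclidean
of length n. -/
theorem stmt7 (A B : Type*) [Ring A] [StarRing A] [Ring B] [StarRing B]
    (π : A →+* B) (hsurj : Function.Surjective π)
    (hπstar : ∀ x : A, π (star x) = star (π x))
    (hker : ∀ x : A, π x = 0 ↔ x ∈ Ideal.jacobson (⊥ : Ideal A))
    (hlift : ∀ a : A, IsUnit (π a) → IsUnit a)
    (σ : B → A) (hsec : ∀ b : B, π (σ b) = b)
    (hσstar : ∀ b : B, σ (star b) = star (σ b))
    (hσunit : ∀ b : B, IsUnit b → IsUnit (σ b))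
    (n : ℕ) (hB : StarEuclideanLen B n) :
    StarEuclideanLen A n := by
  intro a c hbez hsym
  obtain ⟨x, y, hxy⟩ := hbez
  obtain ⟨r', s', h0, h1, hs, hr, hu⟩ := hB (π a) (π c)
    ⟨π x, π y, by rw [← map_mul, ← map_mul, ← map_add, hxy, map_one]⟩
    (by rw [← hπstar, ← hπstar, ← map_mul, ← map_mul, hsym])
  set s : ℕ → A := fun i => σ (s' i) with hs_def
  let q : ℕ → A × A := fun k => Nat.rec (a, c) (fun k p => (p.2, p.1 - s k * p.2)) k
  let r : ℕ → A := fun i => (q i).1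
  have hrec : ∀ i, r (i + 2) = r i - s i * r (i + 1) := fun i => rfl
  have hπr : ∀ i ≤ n, π (r i) = r' i ∧ π (r (i + 1)) = r' (i + 1) := by
    intro i
    induction i with
    | zero =>
      intro _
      constructor
      · exact h0.symm
      · exact h1.symm
    | succ i ih =>
      intro hle
      have hi : i ≤ n := le_of_lt (Nat.lt_of_succ_le hle)
      obtain ⟨p1, p2⟩ := ih hi
      refine ⟨p2, ?_⟩
      have hri : r' i = s' i * r' (i + 1) + r' (i + 2) := hr i (Nat.lt_of_succ_le hle)
      have : π (r (i + 2)) = π (r i) - π (s i) * π (r (i + 1)) := by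
        rw [hrec i, map_sub, map_mul]
      rw [this, p1, p2, hs_def, hsec, hri]
      abel
  refine ⟨r, s, rfl, rfl, ?_, ?_, ?_⟩
  · intro i hi
    rw [hs_def]
    simp only
    rw [← hσstar, hs i hi]
  · intro i _
    rw [hrec i]; abel
  · apply hlift
    rw [(hπr n le_rfl).2]
    exact hu
end

section
/- Let D₁, D₂ be division rings with an anti-isomorphism φ : D₁ → D₂, extended entrywise to matrix rings A_i = M(n, D_i), and let A = A₁ × A₂ with the φ-flip transpose involution (a₁, a₂)* = (φ⁻¹(a₂)ᵗ, φ(a₁)ᵗ). If a, c ∈ A satisfy Aa + Ac = A and a*c = c*a, then there exist s ∈ A^sym and r ∈ A× with a = sc + r. In particular, A is *-Euclidean of decomposition length 1. -/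
/-!
Matrix rings over a division ring have stable range one, which gives `s₁` with `a₁ - s₁ c₁` a
unit; the symmetric element `s = (s₁, s₁*)` then also works in the second coordinate. Moving
that coordinate to `M(n, D₁)` by the anti-isomorphism, with `b, d` the images of `a₂, c₂`, the
relation `a* c = c* a` reads `b c₁ = d a₁`, so `(b - d s₁) c₁ = d (a₁ - s₁ c₁)` and `d` is a right
multiple of `b - d s₁`. Comaximality `b p + d q = 1` then gives `b - d s₁` a right inverse,
and matrix rings over division rings are Dedekind finite.
-/

open Matrix MulOpposite

namespace Module.End

variable {K V : Type*} [DivisionRing K] [AddCommGroup V] [Module K V] [FiniteDimensional K V]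

/- With `π` the projection onto `ker a` along a complement, `e : ker a ≃ V ⧸ range a`
(equal dimensions) and `g` a section of `V → V ⧸ range a` through `c`, the map `s = g ∘ e ∘ π`
makes `a + c s` injective: modulo `range a` the kernel condition reads `e (π v) = 0`. -/
theorem exists_isUnit_add_mul_of_mul_add_mul_eq_one {a c x y : Module.End K V}
    (h : a * x + c * y = 1) : ∃ s, IsUnit (a + c * s) := by
  obtain ⟨M, hM⟩ := Submodule.exists_isCompl (LinearMap.ker a)
  let q := (LinearMap.range a).mkQ
  have hqa (v : V) : q (a v) = 0 := (Submodule.Quotient.mk_eq_zero _).2 ⟨v, rfl⟩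
  have hqc : Function.Surjective (q ∘ₗ c) := by
    intro z
    obtain ⟨v, rfl⟩ := Submodule.mkQ_surjective _ z
    have hv : a (x v) + c (y v) = v := LinearMap.congr_fun h v
    exact ⟨y v, calc q (c (y v)) = q (a (x v)) + q (c (y v)) := by rw [hqa, zero_add]
      _ = q v := by rw [← map_add, hv]⟩
  obtain ⟨g, hg⟩ := (q ∘ₗ c).exists_rightInverse_of_surjective (LinearMap.range_eq_top.2 hqc)
  have hdim : Module.finrank K (LinearMap.ker a) = Module.finrank K (V ⧸ LinearMap.range a) := by
    have := LinearMap.finrank_range_add_finrank_ker a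
    have := Submodule.finrank_quotient_add_finrank (LinearMap.range a)
    omega
  obtain ⟨e⟩ := FiniteDimensional.nonempty_linearEquiv_of_finrank_eq hdim
  let π := (LinearMap.ker a).projectionOnto M hM
  refine ⟨g ∘ₗ e.toLinearMap ∘ₗ π, (LinearMap.isUnit_iff_ker_eq_bot _).2 ?_⟩
  refine (Submodule.eq_bot_iff _).2 fun v hv => ?_
  have hv : a v + c (g (e (π v))) = 0 := hv
  have hπv : π v = 0 := by
    have hqcg : q (c (g (e (π v)))) = e (π v) := LinearMap.congr_fun hg (e (π v))
    have hq0 : q (a v + c (g (e (π v)))) = 0 := by rw [hv, map_zero]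
    rwa [map_add, hqa, zero_add, hqcg, e.map_eq_zero_iff] at hq0
  have hav : v ∈ LinearMap.ker a := by
    simpa [hπv] using hv
  exact Submodule.disjoint_def.1 hM.disjoint v hav
    ((Submodule.projectionOnto_apply_eq_zero_iff hM).1 hπv)

theorem exists_isUnit_sub_mul_of_mul_add_mul_eq_one {a c x y : Module.End K V}
    (h : a * x + c * y = 1) : ∃ s, IsUnit (a - c * s) := by
  obtain ⟨s, hs⟩ := exists_isUnit_add_mul_of_mul_add_mul_eq_one h
  exact ⟨-s, by rwa [mul_neg, sub_neg_eq_add]⟩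

end Module.End

def HasLeftStableRangeOne (R : Type*) [Ring R] : Prop :=
  ∀ a c x y : R, x * a + y * c = 1 → ∃ s, IsUnit (a - s * c)

theorem Matrix.hasLeftStableRangeOne (ι K : Type*) [Fintype ι] [DecidableEq ι] [DivisionRing K] :
    HasLeftStableRangeOne (Matrix ι ι K) := by
  intro a c x y h
  let e := matrixRingEquivEndVecMulOpposite (ι := ι) (A := K)
  have h' : (e a).unop * (e x).unop + (e c).unop * (e y).unop = 1 := by
    simpa using congrArg (fun m => (e m).unop) h
  obtain ⟨s, hs⟩ := Module.End.exists_isUnit_sub_mul_of_mul_add_mul_eq_one h'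
  refine ⟨e.symm (op s), ?_⟩
  rw [← MulEquiv.isUnit_map e, ← isUnit_unop]
  simpa using hs

theorem isUnit_sub_mul_of_mul_eq_mul {R : Type*} [Ring R] [IsDedekindFiniteMonoid R]
    {a b c d p q s : R} (hbd : b * p + d * q = 1) (hbc : b * c = d * a)
    (hu : IsUnit (a - s * c)) : IsUnit (b - d * s) := by
  obtain ⟨u, hu⟩ := hu
  have hd : (b - d * s) * c * ↑u⁻¹ = d := by
    rw [sub_mul, hbc, mul_assoc d s c, ← mul_sub, ← hu, mul_assoc, Units.mul_inv, mul_one]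
  refine IsUnit.of_mul_eq_one (p + c * ↑u⁻¹ * (s * p + q)) ?_
  calc (b - d * s) * (p + c * ↑u⁻¹ * (s * p + q))
      = (b - d * s) * p + (b - d * s) * c * ↑u⁻¹ * (s * p + q) := by noncomm_ring
    _ = b * p + d * q := by rw [hd]; noncomm_ring
    _ = 1 := hbd

section ExchangeInvolution

variable {R S : Type*} [Ring R] [Ring S]

def exchangeStar (T : R ≃+* Sᵐᵒᵖ) (a : R × S) : R × S :=
  (T.symm (op a.2), (T a.1).unop)

theorem exists_exchangeStar_eq_self_isUnit_eq_mul_add [IsDedekindFiniteMonoid R]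
    (hR : HasLeftStableRangeOne R) (T : R ≃+* Sᵐᵒᵖ) (a c : R × S)
    (hcomax : ∃ x y : R × S, x * a + y * c = 1)
    (hsym : exchangeStar T a * c = exchangeStar T c * a) :
    ∃ s r : R × S, exchangeStar T s = s ∧ IsUnit r ∧ a = s * c + r := by
  obtain ⟨x, y, hxy⟩ := hcomax
  obtain ⟨s₁, hs₁⟩ := hR a.1 c.1 x.1 y.1 (by simpa using congrArg Prod.fst hxy)
  let τ (m : S) : R := T.symm (op m)
  have hτ₂ : τ a.2 * τ x.2 + τ c.2 * τ y.2 = 1 := by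
    simpa [τ] using congrArg (fun z => τ z.2) hxy
  have hτ₁ : τ a.2 * c.1 = τ c.2 * a.1 := congrArg Prod.fst hsym
  let s : R × S := (s₁, (T s₁).unop)
  refine ⟨s, a - s * c, by simp [exchangeStar, s], Prod.isUnit_iff.2 ⟨hs₁, ?_⟩, by abel⟩
  have hr₂ : τ (a - s * c).2 = τ a.2 - τ c.2 * s₁ := by simp [τ, s]
  rw [← isUnit_op, ← MulEquiv.isUnit_map T.symm]
  change IsUnit (τ (a - s * c).2)
  rw [hr₂]
  exact isUnit_sub_mul_of_mul_eq_mul hτ₂ hτ₁ hs₁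

end ExchangeInvolution

def RingEquiv.opOfAnti {D₁ D₂ : Type*} [Ring D₁] [Ring D₂] (φ : D₁ → D₂) (ψ : D₂ → D₁)
    (hadd : ∀ x y : D₁, φ (x + y) = φ x + φ y) (hmul : ∀ x y : D₁, φ (x * y) = φ y * φ x)
    (hψ : Function.LeftInverse ψ φ) (hψ' : Function.RightInverse ψ φ) : D₁ ≃+* D₂ᵐᵒᵖ where
  toFun x := op (φ x)
  invFun y := ψ y.unop
  left_inv := hψ
  right_inv y := congrArg op (hψ' y.unop)
  map_mul' x y := by rw [hmul, op_mul]
  map_add' x y := by rw [hadd, op_add]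

theorem stmt8_general (n : ℕ) (D₁ D₂ : Type*) [DivisionRing D₁] [DivisionRing D₂]
    (φ : D₁ → D₂) (ψ : D₂ → D₁)
    (hadd : ∀ x y : D₁, φ (x + y) = φ x + φ y)
    (hmul : ∀ x y : D₁, φ (x * y) = φ y * φ x)
    (hψ : Function.LeftInverse ψ φ) (hψ' : Function.RightInverse ψ φ) :
    ∀ a c : Matrix (Fin n) (Fin n) D₁ × Matrix (Fin n) (Fin n) D₂,
      (∃ x y : Matrix (Fin n) (Fin n) D₁ × Matrix (Fin n) (Fin n) D₂,
        x * a + y * c = 1) →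
      (((a.2.map ψ)ᵀ, (a.1.map φ)ᵀ) * c = ((c.2.map ψ)ᵀ, (c.1.map φ)ᵀ) * a) →
      ∃ s r : Matrix (Fin n) (Fin n) D₁ × Matrix (Fin n) (Fin n) D₂,
        ((s.2.map ψ)ᵀ, (s.1.map φ)ᵀ) = s ∧ IsUnit r ∧ a = s * c + r := by
  let T := (RingEquiv.opOfAnti φ ψ hadd hmul hψ hψ').mapMatrix.trans
    (RingEquiv.mopMatrix (m := Fin n))
  have hT (b : Matrix (Fin n) (Fin n) D₁ × Matrix (Fin n) (Fin n) D₂) :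
      exchangeStar T b = ((b.2.map ψ)ᵀ, (b.1.map φ)ᵀ) := rfl
  simp only [← hT]
  exact exists_exchangeStar_eq_self_isUnit_eq_mul_add (Matrix.hasLeftStableRangeOne _ _) T

/-- for division rings D₁, D₂ linked by an anti-isomorphism φ
(with inverse ψ), the ring A = M(n,D₁) × M(n,D₂) with the φ-flip transpose
involution (a₁,a₂)* = (ψ(a₂)ᵗ, φ(a₁)ᵗ) is *-Euclidean of decomposition
length 1. -/
theorem stmt8 (n : ℕ) (D₁ D₂ : Type*) [DivisionRing D₁] [DivisionRing D₂]
    (φ : D₁ → D₂) (ψ : D₂ → D₁)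
    (hadd : ∀ x y : D₁, φ (x + y) = φ x + φ y)
    (hmul : ∀ x y : D₁, φ (x * y) = φ y * φ x)
    (hone : φ 1 = 1)
    (hψ : Function.LeftInverse ψ φ) (hψ' : Function.RightInverse ψ φ) :
    ∀ a c : Matrix (Fin n) (Fin n) D₁ × Matrix (Fin n) (Fin n) D₂,
      (∃ x y : Matrix (Fin n) (Fin n) D₁ × Matrix (Fin n) (Fin n) D₂,
        x * a + y * c = 1) →
      (((a.2.map ψ)ᵀ, (a.1.map φ)ᵀ) * c = ((c.2.map ψ)ᵀ, (c.1.map φ)ᵀ) * a) →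
      ∃ s r : Matrix (Fin n) (Fin n) D₁ × Matrix (Fin n) (Fin n) D₂,
        ((s.2.map ψ)ᵀ, (s.1.map φ)ᵀ) = s ∧ IsUnit r ∧ a = s * c + r :=
  stmt8_general n D₁ D₂ φ ψ hadd hmul hψ hψ'
end

section
/- Let F be a field and n ≥ 1. The matrix ring A = M(n, F) with the transpose involution is *-Euclidean of decomposition length 1: for all a, c ∈ A with Aa + Ac = A and aᵗc = cᵗa, there exist a symmetric matrix s and an invertible matrix r with a = sc + r. -/
open Matrix

/-- Diagonal case of the *-Euclidean property. -/
lemma stmt9_diag (F : Type*) [Field F] (n : ℕ)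
    (a : Matrix (Fin n) (Fin n) F) (d : Fin n → F)
    (hcop : ∃ x y : Matrix (Fin n) (Fin n) F, x * a + y * diagonal d = 1)
    (hsym : aᵀ * diagonal d = (diagonal d)ᵀ * a) :
    ∃ s r : Matrix (Fin n) (Fin n) F, sᵀ = s ∧ IsUnit r ∧
      a = s * diagonal d + r := by
  classical
  -- key entrywise relation : a j i * d j = d i * a i j
  have key : ∀ i j, a j i * d j = d i * a i j := by
    intro i j
    have := congrFun (congrFun hsym i) j
    simpa [Matrix.mul_apply, Matrix.diagonal, Matrix.transpose_apply,
      Finset.sum_ite_eq, Finset.sum_ite_eq'] using this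
  set s : Matrix (Fin n) (Fin n) F :=
    Matrix.of fun i j =>
      if d i ≠ 0 ∧ d j ≠ 0 then (a i j - if i = j then 1 else 0) / d j else 0 with hs
  refine ⟨s, a - s * diagonal d, ?_, ?_, by abel⟩
  · -- symmetry of s
    ext i j
    simp only [transpose_apply, hs, Matrix.of_apply]
    by_cases hi : d i = 0 <;> by_cases hj : d j = 0 <;>
      simp [hi, hj]
    · -- both nonzero
      rw [div_eq_div_iff hi hj]
      have hk := key i j
      by_cases hij : i = j
      · subst hij; simp [eq_comm]
      · simp only [hij, Ne.symm hij, if_false, sub_zero]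
        rw [mul_comm (d i) (a i j)] at hk
        linear_combination hk
  · -- r is a unit
    rw [Matrix.mulVec_injective_iff_isUnit.symm]
    intro v w hvw
    have h0 : ∀ u, (a - s * diagonal d) *ᵥ u = a *ᵥ u - s *ᵥ (diagonal d *ᵥ u) := by
      intro u; rw [Matrix.sub_mulVec, Matrix.mulVec_mulVec]
    -- reduce to kernel statement
    suffices hker : ∀ u, (a - s * diagonal d) *ᵥ u = 0 → u = 0 by
      have := hker (v - w) (by rw [Matrix.mulVec_sub, hvw, sub_self])
      exact sub_eq_zero.mp this
    intro u hu
    -- entries of r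
    have hr : ∀ i j, (a - s * diagonal d) i j =
        if d i ≠ 0 ∧ d j ≠ 0 then (if i = j then 1 else 0) else a i j := by
      intro i j
      simp only [Matrix.sub_apply, Matrix.mul_diagonal, hs, Matrix.of_apply]
      by_cases hi : d i = 0 <;> by_cases hj : d j = 0 <;>
        simp [hi, hj, div_mul_cancel₀]
    -- step 1 : u vanishes where d ≠ 0
    have step1 : ∀ i, d i ≠ 0 → u i = 0 := by
      intro i hi
      have hui := congrFun hu i
      rw [Matrix.mulVec, dotProduct] at hui
      have : ∑ j, (a - s * diagonal d) i j * u j = u i := by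
        rw [Finset.sum_eq_single i]
        · rw [hr i i]; simp [hi]
        · intro j _ hj
          rw [hr i j]
          by_cases hdj : d j = 0
          · -- a i j = 0 since d i ≠ 0, d j = 0
            have := key i j
            rw [hdj, mul_zero] at this
            have : a i j = 0 := by
              field_simp at this
              exact (mul_eq_zero.mp this.symm).resolve_left hi
            simp [hdj, this, hi]
          · simp [hi, hdj, Ne.symm hj]
        · simp
      rw [this] at hui
      exact hui
    -- step 2 : a *ᵥ u = 0
    have hDu : diagonal d *ᵥ u = 0 := by
      ext i
      rw [Matrix.mulVec_diagonal]
      by_cases hi : d i = 0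
      · simp [hi]
      · simp [step1 i hi]
    have hau : a *ᵥ u = 0 := by
      have : (a - s * diagonal d) *ᵥ u = a *ᵥ u - s *ᵥ (diagonal d *ᵥ u) := h0 u
      rw [hu, hDu, Matrix.mulVec_zero, sub_zero] at this
      exact this.symm
    obtain ⟨x, y, hxy⟩ := hcop
    have : (x * a + y * diagonal d) *ᵥ u = u := by rw [hxy, Matrix.one_mulVec]
    rw [Matrix.add_mulVec, ← Matrix.mulVec_mulVec, ← Matrix.mulVec_mulVec,
      hau, hDu, Matrix.mulVec_zero, Matrix.mulVec_zero, add_zero] at this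
    exact this.symm

/-- M(n,F) over a field with the transpose involution is
*-Euclidean of decomposition length 1. -/
theorem stmt9 (F : Type*) [Field F] (n : ℕ) (hn : 1 ≤ n)
    (a c : Matrix (Fin n) (Fin n) F)
    (hcop : ∃ x y : Matrix (Fin n) (Fin n) F, x * a + y * c = 1)
    (hsym : aᵀ * c = cᵀ * a) :
    ∃ s r : Matrix (Fin n) (Fin n) F, sᵀ = s ∧ IsUnit r ∧ a = s * c + r := by
  obtain ⟨L, L', d, hd⟩ :=
    Matrix.Pivot.exists_list_transvec_mul_diagonal_mul_list_transvec c
  set P : Matrix (Fin n) (Fin n) F := (L.map Matrix.TransvectionStruct.toMatrix).prod with hP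
  set Q : Matrix (Fin n) (Fin n) F := (L'.map Matrix.TransvectionStruct.toMatrix).prod with hQ
  have hPu : IsUnit P := by
    rw [Matrix.isUnit_iff_isUnit_det, hP, Matrix.TransvectionStruct.det_toMatrix_prod]
    exact isUnit_one
  have hQu : IsUnit Q := by
    rw [Matrix.isUnit_iff_isUnit_det, hQ, Matrix.TransvectionStruct.det_toMatrix_prod]
    exact isUnit_one
  have hPd : IsUnit P.det := (Matrix.isUnit_iff_isUnit_det P).mp hPu
  have hQd : IsUnit Q.det := (Matrix.isUnit_iff_isUnit_det Q).mp hQu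
  have hPtd : IsUnit (Pᵀ).det := Matrix.isUnit_det_transpose P hPd
  set D : Matrix (Fin n) (Fin n) F := diagonal d with hD
  set a' : Matrix (Fin n) (Fin n) F := Pᵀ * a * Q⁻¹ with ha'
  have hDc : D = P⁻¹ * c * Q⁻¹ := by
    rw [hd]
    simp only [Matrix.mul_assoc, Matrix.nonsing_inv_mul_cancel_left _ _ hPd,
      Matrix.mul_nonsing_inv_cancel_right _ _ hQd, ← hP, ← hQ, ← hD]
  have hcop' : ∃ x y : Matrix (Fin n) (Fin n) F, x * a' + y * D = 1 := by
    obtain ⟨x, y, hxy⟩ := hcop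
    refine ⟨Q * x * (Pᵀ)⁻¹, Q * y * P, ?_⟩
    rw [ha', hDc]
    simp only [Matrix.mul_assoc, Matrix.nonsing_inv_mul_cancel_left _ _ hPtd,
      Matrix.nonsing_inv_mul_cancel_left _ _ hPd]
    rw [Matrix.mul_nonsing_inv_cancel_left _ _ hPd, ← Matrix.mul_assoc x,
      ← Matrix.mul_assoc y, ← Matrix.mul_add, ← Matrix.add_mul, hxy, Matrix.one_mul, Matrix.mul_nonsing_inv _ hQd]
  have hsym' : a'ᵀ * D = Dᵀ * a' := by
    rw [ha', hDc]
    simp only [Matrix.transpose_mul, Matrix.transpose_nonsing_inv, Matrix.transpose_transpose]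
    simp only [Matrix.mul_assoc]
    rw [Matrix.mul_nonsing_inv_cancel_left _ _ hPd,
      Matrix.nonsing_inv_mul_cancel_left _ _ hPtd,
      ← Matrix.mul_assoc aᵀ, ← Matrix.mul_assoc cᵀ, hsym]
  obtain ⟨s', r', hs', hr', heq⟩ := stmt9_diag F n a' d hcop' hsym'
  refine ⟨(Pᵀ)⁻¹ * s' * P⁻¹, (Pᵀ)⁻¹ * r' * Q, ?_, ?_, ?_⟩
  · simp only [Matrix.transpose_mul, Matrix.transpose_nonsing_inv, Matrix.transpose_transpose,
      hs', Matrix.mul_assoc]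
  · exact ((Matrix.isUnit_nonsing_inv_iff.mpr ((Matrix.isUnit_transpose P).mpr hPu)).mul hr').mul hQu
  · have h1 : (Pᵀ)⁻¹ * (a' * Q) = a := by
      rw [ha']
      simp only [Matrix.mul_assoc]
      rw [Matrix.nonsing_inv_mul _ hQd, Matrix.mul_one,
        Matrix.nonsing_inv_mul_cancel_left _ _ hPtd]
    have h2 : D * Q = P⁻¹ * c := by
      rw [hDc, Matrix.nonsing_inv_mul_cancel_right _ _ hQd]
    calc a = (Pᵀ)⁻¹ * (a' * Q) := h1.symm
      _ = (Pᵀ)⁻¹ * ((s' * D + r') * Q) := by rw [heq, hD]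
      _ = (Pᵀ)⁻¹ * s' * P⁻¹ * c + (Pᵀ)⁻¹ * r' * Q := by
          rw [Matrix.add_mul, Matrix.mul_add, Matrix.mul_assoc s', h2]
          simp only [Matrix.mul_assoc]
end

section
/- Let D be a division ring of characteristic 2 and H = M(2, D) with involution h* = J hᵗ J⁻¹ where J = [[0,1],[1,0]]. If a, c ∈ H satisfy Ha + Hc = H, then there exists s ∈ H^sym with a + sc ∈ H× (invertible). In particular H is *-Euclidean of decomposition length 1. -/
/-!
In characteristic 2 a matrix is `starH`-symmetric exactly when its trace vanishes, and
`a = s c + (a + s c)`, so the decomposition follows from the first claim.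

If `a` is invertible take `s = 0`. If `c` is invertible, put `b = a c⁻¹` and `s = C + b` with
`C = [[tr b, 1], [1, 0]]`: then `tr s = 2 tr b = 0` and `a + s c = C c` is invertible.

Otherwise both have rank at most one over the division ring: `a = g v` and `c = u w` for columns
`g, u ≠ 0` and rows `v, w`, and `x a + y c = 1` says that the rows `v, w` form an invertible
matrix `V`. Since `u ≠ 0`, every column `z` is `s u` for some symmetric `s`, and then
`a + s c = g v + z w = [g | z] V`; it remains to complete `g` to an invertible matrix `[g | z]`.
-/

open Matrix

/-- The involution h ↦ J hᵗ J⁻¹ on M(2,D) in characteristic 2, where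
J = [[0,1],[1,0]] = J⁻¹. -/
def starH {D : Type*} [Ring D] (h : Matrix (Fin 2) (Fin 2) D) :
    Matrix (Fin 2) (Fin 2) D :=
  (!![0, 1; 1, 0] : Matrix (Fin 2) (Fin 2) D) * hᵀ *
    (!![0, 1; 1, 0] : Matrix (Fin 2) (Fin 2) D)

section Ring

variable {R : Type*} [Ring R]

theorem starH_eq (m : Matrix (Fin 2) (Fin 2) R) :
    starH m = !![m 1 1, m 0 1; m 1 0, m 0 0] := by
  ext i j
  fin_cases i <;> fin_cases j <;> simp [starH, mul_apply, vecMul, dotProduct, Fin.sum_univ_two]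

theorem starH_eq_self_iff {m : Matrix (Fin 2) (Fin 2) R} :
    starH m = m ↔ m 0 0 = m 1 1 := by
  simp only [starH_eq, ← Matrix.ext_iff, Fin.forall_fin_two, of_apply, cons_val', cons_val_zero,
    cons_val_one, empty_val', cons_val_fin_one]
  grind

theorem starH_eq_self_iff_trace_eq_zero [CharP R 2] {m : Matrix (Fin 2) (Fin 2) R} :
    starH m = m ↔ m.trace = 0 := by
  rw [starH_eq_self_iff, trace_fin_two, CharTwo.add_eq_zero]

theorem isUnit_fin_two_companion (t : R) : IsUnit !![t, 1; 1, 0] :=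
  ⟨⟨_, !![0, 1; 1, -t], by simp [one_fin_two], by simp [one_fin_two]⟩, rfl⟩

theorem exists_starH_eq_self_isUnit_add_mul_of_isUnit [CharP R 2]
    {c : Matrix (Fin 2) (Fin 2) R} (hc : IsUnit c) (a : Matrix (Fin 2) (Fin 2) R) :
    ∃ s, starH s = s ∧ IsUnit (a + s * c) := by
  obtain ⟨c, rfl⟩ := hc
  set b := a * (↑c⁻¹ : Matrix (Fin 2) (Fin 2) R)
  refine ⟨!![b.trace, 1; 1, 0] + b, ?_, ?_⟩
  · rw [starH_eq_self_iff_trace_eq_zero, trace_add, trace_fin_two_of, add_zero,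
      CharTwo.add_self_eq_zero]
  · rw [add_mul, mul_assoc, Units.inv_mul, mul_one, add_left_comm, CharTwo.add_self_eq_zero,
      add_zero]
    exact (isUnit_fin_two_companion _).mul c.isUnit

end Ring

section DivisionRing

variable {D : Type*} [DivisionRing D]

theorem isUnit_of_vecMul_eq_zero {n : Type*} [Fintype n] [DecidableEq n]
    {A : Matrix n n D} (h : ∀ v, v ᵥ* A = 0 → v = 0) : IsUnit A := by
  obtain ⟨B, hB⟩ := vecMul_surjective_iff_exists_left_inverse.mp <|
    LinearMap.injective_iff_surjective.mp <| (injective_iff_map_eq_zero A.vecMulLinear).mpr h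
  exact IsUnit.of_mul_eq_one_right B hB

theorem exists_eq_vecMulVec_of_not_isUnit {a : Matrix (Fin 2) (Fin 2) D} (ha : ¬IsUnit a) :
    ∃ g v, g ≠ 0 ∧ a = vecMulVec g v := by
  obtain ⟨r, hr, hra⟩ : ∃ r, r ≠ 0 ∧ r ᵥ* a = 0 := by
    by_contra! h
    exact ha (isUnit_of_vecMul_eq_zero fun v hv => by_contra fun hv' => h v hv' hv)
  have hrow : ∀ j, r 0 * a 0 j + r 1 * a 1 j = 0 := fun j => by
    simpa [vecMul, dotProduct, Fin.sum_univ_two] using congrFun hra j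
  by_cases h0 : r 0 = 0
  · have h1 : r 1 ≠ 0 := fun h1 => hr (by ext i; fin_cases i <;> simp [h0, h1])
    refine ⟨![1, 0], a 0, by simp, ?_⟩
    ext i j; fin_cases i
    · simp [vecMulVec_apply]
    · simpa [vecMulVec_apply, h0, h1] using hrow j
  · refine ⟨![-(r 0)⁻¹ * r 1, 1], a 1, by simp, ?_⟩
    ext i j; fin_cases i
    · calc a 0 j = (r 0)⁻¹ * (r 0 * a 0 j) := (inv_mul_cancel_left₀ h0 _).symm
        _ = _ := by simp [eq_neg_of_add_eq_zero_left (hrow j), vecMulVec_apply, mul_assoc]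
    · simp [vecMulVec_apply]

theorem exists_isUnit_transpose_of_ne_zero {g : Fin 2 → D} (hg : g ≠ 0) :
    ∃ z, IsUnit (of ![g, z])ᵀ := by
  by_cases h0 : g 0 = 0
  · have h1 : g 1 ≠ 0 := fun h1 => hg (by ext i; fin_cases i <;> simp [h0, h1])
    refine ⟨![1, 0], IsUnit.of_mul_eq_one !![0, (g 1)⁻¹; 1, 0] ?_⟩
    ext i j; fin_cases i <;> fin_cases j <;> simp [mul_apply, h0, h1]
  · refine ⟨![0, 1], IsUnit.of_mul_eq_one !![(g 0)⁻¹, 0; -g 1 * (g 0)⁻¹, 1] ?_⟩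
    ext i j; fin_cases i <;> fin_cases j <;> simp [mul_apply, h0]

theorem exists_starH_eq_self_mulVec_eq {u : Fin 2 → D} (hu : u ≠ 0) (z : Fin 2 → D) :
    ∃ s, starH s = s ∧ s *ᵥ u = z := by
  by_cases h1 : u 1 = 0
  · have h0 : u 0 ≠ 0 := fun h0 => hu (by ext i; fin_cases i <;> simp [h0, h1])
    refine ⟨!![z 0 * (u 0)⁻¹, 0; z 1 * (u 0)⁻¹, z 0 * (u 0)⁻¹], by simp [starH_eq_self_iff], ?_⟩
    ext i; fin_cases i <;> simp [mulVec, dotProduct, Fin.sum_univ_two, h0, h1]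
  · set p := z 1 * (u 1)⁻¹
    refine ⟨!![p, (z 0 - p * u 0) * (u 1)⁻¹; 0, p], by simp [starH_eq_self_iff], ?_⟩
    ext i; fin_cases i <;> simp [p, mulVec, dotProduct, Fin.sum_univ_two, h1, mul_assoc]

theorem vecMulVec_add_vecMulVec (g z v w : Fin 2 → D) :
    vecMulVec g v + vecMulVec z w = (of ![g, z])ᵀ * of ![v, w] := by
  ext i j
  simp [mul_apply, Fin.sum_univ_two, vecMulVec_apply]

theorem exists_starH_eq_self_isUnit_vecMulVec_add {g u v w : Fin 2 → D} (hg : g ≠ 0) (hu : u ≠ 0)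
    (h : ∃ x y : Matrix (Fin 2) (Fin 2) D, x * vecMulVec g v + y * vecMulVec u w = 1) :
    ∃ s, starH s = s ∧ IsUnit (vecMulVec g v + s * vecMulVec u w) := by
  obtain ⟨x, y, hxy⟩ := h
  have hV : IsUnit (of ![v, w]) := by
    rw [mul_vecMulVec, mul_vecMulVec, vecMulVec_add_vecMulVec] at hxy
    exact IsUnit.of_mul_eq_one_right _ hxy
  obtain ⟨z, hz⟩ := exists_isUnit_transpose_of_ne_zero hg
  obtain ⟨s, hs, hsu⟩ := exists_starH_eq_self_mulVec_eq hu z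
  refine ⟨s, hs, ?_⟩
  rw [mul_vecMulVec, hsu, vecMulVec_add_vecMulVec]
  exact hz.mul hV

theorem exists_starH_eq_self_isUnit_add_mul [CharP D 2] {a c : Matrix (Fin 2) (Fin 2) D}
    (h : ∃ x y : Matrix (Fin 2) (Fin 2) D, x * a + y * c = 1) :
    ∃ s, starH s = s ∧ IsUnit (a + s * c) := by
  by_cases ha : IsUnit a
  · exact ⟨0, by simp [starH_eq_self_iff], by simpa using ha⟩
  by_cases hc : IsUnit c
  · exact exists_starH_eq_self_isUnit_add_mul_of_isUnit hc a
  obtain ⟨g, v, hg, rfl⟩ := exists_eq_vecMulVec_of_not_isUnit ha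
  obtain ⟨u, w, hu, rfl⟩ := exists_eq_vecMulVec_of_not_isUnit hc
  exact exists_starH_eq_self_isUnit_vecMulVec_add hg hu h

end DivisionRing

/-- over a division ring D of characteristic 2, for any a, c
generating H = M(2,D) as a left ideal there is a symmetric s with a + sc
invertible; in particular H is *-Euclidean of decomposition length 1. -/
theorem stmt11 (D : Type*) [DivisionRing D] [CharP D 2] :
    (∀ a c : Matrix (Fin 2) (Fin 2) D,
      (∃ x y : Matrix (Fin 2) (Fin 2) D, x * a + y * c = 1) →
      ∃ s : Matrix (Fin 2) (Fin 2) D, starH s = s ∧ IsUnit (a + s * c)) ∧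
    (∀ a c : Matrix (Fin 2) (Fin 2) D,
      (∃ x y : Matrix (Fin 2) (Fin 2) D, x * a + y * c = 1) →
      starH a * c = starH c * a →
      ∃ s r : Matrix (Fin 2) (Fin 2) D, starH s = s ∧ IsUnit r ∧ a = s * c + r) := by
  refine ⟨fun a c h => exists_starH_eq_self_isUnit_add_mul h, fun a c h _ => ?_⟩
  obtain ⟨s, hs, hu⟩ := exists_starH_eq_self_isUnit_add_mul h
  exact ⟨s, a + s * c, hs, hu, by rw [add_left_comm, CharTwo.add_self_eq_zero, add_zero]⟩
end

section
/- Let F be a field of characteristic 2, n ≥ 1, and let A = M(2n, F) with involution a* = B aᵗ B, where B is the block-diagonal matrix with n copies of J = [[0,1],[1,0]] on the diagonal (note B = B⁻¹). If a, c ∈ A satisfy Aa + Ac = A and a*c = c*a, then there exists s ∈ A^sym with a + sc ∈ A×. In particular A is *-Euclidean of decomposition length 1. -/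
open Matrix

/-- The 2n × 2n block-diagonal matrix with n copies of J = [[0,1],[1,0]]
on the diagonal: the (i,j) entry is 1 iff i and j lie in the same 2-block
and i ≠ j. -/
def blockB (F : Type*) [Field F] (n : ℕ) : Matrix (Fin (2 * n)) (Fin (2 * n)) F :=
  Matrix.of fun i j => if (i : ℕ) / 2 = (j : ℕ) / 2 ∧ i ≠ j then 1 else 0

section Helpers

variable {F : Type*} [Field F] {m : Type*} [Fintype m] [DecidableEq m]

private lemma mat_eq_of_mulVec {M N : Matrix m m F} (h : ∀ v, M *ᵥ v = N *ᵥ v) : M = N := by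
  have heq : Matrix.toLin' M = Matrix.toLin' N := by
    apply LinearMap.ext; intro v
    simpa [Matrix.toLin'_apply] using h v
  have := congrArg LinearMap.toMatrix' heq
  simpa using this

/-- Every subspace `K` of `F^m` has a complement `W` on which the standard
dot-product pairing is nondegenerate (take `W` spanned by standard basis vectors). -/
private lemma exists_nondeg_compl (K : Submodule F (m → F)) :
    ∃ W : Submodule F (m → F), IsCompl K W ∧
      ∀ w ∈ W, (∀ u ∈ W, u ⬝ᵥ w = 0) → w = 0 := by
  classical
  obtain ⟨sK, hsKsub, hsKspan, hsKli⟩ := exists_linearIndependent F (K : Set (m → F))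
  have hKspan : Submodule.span F sK = K := by rw [hsKspan, Submodule.span_eq]
  set std : m → (m → F) := fun i => Pi.single i 1 with hstd
  have hstd_span : Submodule.span F (Set.range std) = ⊤ := by
    have h1 := (Pi.basisFun F m).span_eq
    have hr : Set.range (Pi.basisFun F m) = Set.range std := by
      ext x; constructor <;> rintro ⟨i, rfl⟩ <;> exact ⟨i, by simp [hstd]⟩
    rwa [hr] at h1
  obtain ⟨b, hbt, hsb, htb, hbli⟩ :=
    exists_linearIndepOn_id_extension hsKli (Set.subset_union_left (t := Set.range std))
  refine ⟨Submodule.span F (b \ sK), ⟨?_, ?_⟩, ?_⟩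
  · -- disjointness
    rw [← hKspan]
    have hbli' : LinearIndependent F ((↑) : b → (m → F)) := hbli
    have hd := hbli'.disjoint_span_image (s := (↑) ⁻¹' sK) (t := (↑) ⁻¹' (b \ sK))
      (by simp [Set.disjoint_left])
    have h1 : ((↑) : b → (m → F)) '' ((↑) ⁻¹' sK) = sK := by
      rw [Subtype.image_preimage_coe]; exact Set.inter_eq_self_of_subset_right hsb
    have h2 : ((↑) : b → (m → F)) '' ((↑) ⁻¹' (b \ sK)) = b \ sK := by
      rw [Subtype.image_preimage_coe]
      exact Set.inter_eq_self_of_subset_right Set.diff_subset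
    rwa [h1, h2] at hd
  · -- codisjointness
    rw [codisjoint_iff, ← hKspan, ← Submodule.span_union, eq_top_iff, ← hstd_span]
    apply Submodule.span_le.2
    rintro x ⟨i, rfl⟩
    have hx : std i ∈ Submodule.span F b := htb (Set.mem_union_right _ ⟨i, rfl⟩)
    have hbsub : b ⊆ sK ∪ (b \ sK) := fun y hy => by
      by_cases hys : y ∈ sK
      · exact Or.inl hys
      · exact Or.inr ⟨hy, hys⟩
    exact Submodule.span_mono hbsub hx
  · -- nondegeneracy
    intro w hw hperp
    by_contra hw0
    obtain ⟨i, hwi⟩ : ∃ i, w i ≠ 0 := by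
      by_contra hc; push_neg at hc; exact hw0 (funext hc)
    have hsupp : ∀ x ∈ Submodule.span F (b \ sK), ∀ j, std j ∉ b \ sK → x j = 0 := by
      intro x hx
      refine Submodule.span_induction ?_ ?_ ?_ ?_ hx
      · intro y hy j hj
        have hy' : y ∈ Set.range std := by
          rcases hbt hy.1 with h | h
          · exact absurd h hy.2
          · exact h
        rcases hy' with ⟨i0, rfl⟩
        have hji : j ≠ i0 := by rintro rfl; exact hj hy
        simp [hstd, Pi.single_apply, hji.symm]
      · intro j _; rfl
      · intro x y _ _ hx hy j hj; simp [hx j hj, hy j hj]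
      · intro t x _ hx j hj; simp [hx j hj]
    have hiS : std i ∈ b \ sK := by
      by_contra hiS
      exact hwi (hsupp w hw i hiS)
    have hp := hperp (std i) (Submodule.subset_span hiS)
    rw [hstd] at hp
    rw [single_dotProduct, one_mul] at hp
    exact hwi hp

/-- Given a complement `W` of the kernel of `q`, there is an invertible matrix `h`
which is a reflexive inner inverse of `q`, with the idempotent `h * q` projecting
onto `W`. -/
private lemma exists_refl_inv (q : Matrix m m F) (W : Submodule F (m → F))
    (hW : IsCompl (LinearMap.ker q.mulVecLin) W) :
    ∃ h h' : Matrix m m F, h * h' = 1 ∧ h' * h = 1 ∧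
      (∀ v, (h * q) *ᵥ v ∈ W) ∧ (∀ w ∈ W, (h * q) *ᵥ w = w) := by
  classical
  set Q := q.mulVecLin with hQ
  set K := LinearMap.ker Q with hK
  set R := LinearMap.range Q with hR
  let f : W →ₗ[F] R := LinearMap.codRestrict R (Q ∘ₗ W.subtype)
    (fun w => LinearMap.mem_range_self _ _)
  have hfval : ∀ w : W, (f w : m → F) = Q (w : m → F) := fun w => rfl
  have hfinj : Function.Injective f := by
    intro x y hxy
    have h1 : Q (x : m → F) = Q (y : m → F) := by
      have := congrArg (Subtype.val) hxy
      rwa [hfval, hfval] at this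
    have h2 : ((x : m → F) - y) ∈ K := by
      simp only [hK, LinearMap.mem_ker, map_sub, h1, sub_self]
    have h3 : ((x : m → F) - y) ∈ W := sub_mem x.2 y.2
    have h4 : ((x : m → F) - y) = 0 := by
      have hd := hW.disjoint
      rw [Submodule.disjoint_def] at hd
      exact hd _ h2 h3
    exact Subtype.ext (sub_eq_zero.mp h4)
  have hfsurj : Function.Surjective f := by
    rintro ⟨y, hy⟩
    rcases hy with ⟨x, rfl⟩
    have hx : x ∈ K ⊔ W := by rw [hW.codisjoint.eq_top]; trivial
    rcases Submodule.mem_sup.mp hx with ⟨k, hk, w, hw, rfl⟩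
    refine ⟨⟨w, hw⟩, Subtype.ext ?_⟩
    rw [hfval]
    have hk0 : Q k = 0 := hk
    show Q w = Q (k + w)
    simp [map_add, hk0]
  let eWR : W ≃ₗ[F] R := LinearEquiv.ofBijective f ⟨hfinj, hfsurj⟩
  have heWR : ∀ w : W, ((eWR w : R) : m → F) = Q (w : m → F) := fun w => rfl
  obtain ⟨R', hR'c⟩ := Submodule.exists_isCompl R
  obtain ⟨W', hW'c⟩ := Submodule.exists_isCompl W
  have hfr : Module.finrank F R' = Module.finrank F W' := by
    have h1 := Submodule.finrank_add_eq_of_isCompl hR'c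
    have h2 := Submodule.finrank_add_eq_of_isCompl hW'c
    have h3 : Module.finrank F R = Module.finrank F W := eWR.symm.finrank_eq
    omega
  obtain ⟨eRW'⟩ : Nonempty (R' ≃ₗ[F] W') := ⟨LinearEquiv.ofFinrankEq _ _ hfr⟩
  set g : (m → F) ≃ₗ[F] (m → F) :=
    (Submodule.prodEquivOfIsCompl R R' hR'c).symm ≪≫ₗ
      (eWR.symm.prodCongr eRW') ≪≫ₗ (Submodule.prodEquivOfIsCompl W W' hW'c) with hgdef
  have hg : ∀ y : R, g (y : m → F) = ((eWR.symm y : W) : m → F) := by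
    intro y
    have h0 : (eWR.symm.prodCongr eRW') ((Submodule.prodEquivOfIsCompl R R' hR'c).symm (y : m → F))
        = (eWR.symm y, 0) := by
      rw [Submodule.prodEquivOfIsCompl_symm_apply_left, LinearEquiv.prodCongr_apply]
      exact Prod.ext rfl (map_zero eRW')
    rw [hgdef, LinearEquiv.trans_apply, LinearEquiv.trans_apply, h0,
      Submodule.coe_prodEquivOfIsCompl']
    simp
  refine ⟨LinearMap.toMatrix' (g : (m → F) →ₗ[F] (m → F)),
    LinearMap.toMatrix' (g.symm : (m → F) →ₗ[F] (m → F)), ?_, ?_, ?_, ?_⟩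
  · rw [← LinearMap.toMatrix'_comp]
    have hcomp : (g : (m → F) →ₗ[F] (m → F)) ∘ₗ (g.symm : (m → F) →ₗ[F] (m → F)) =
        LinearMap.id := by ext v; simp
    rw [hcomp, LinearMap.toMatrix'_id]
  · rw [← LinearMap.toMatrix'_comp]
    have hcomp : (g.symm : (m → F) →ₗ[F] (m → F)) ∘ₗ (g : (m → F) →ₗ[F] (m → F)) =
        LinearMap.id := by ext v; simp
    rw [hcomp, LinearMap.toMatrix'_id]
  · intro v
    have happ : (LinearMap.toMatrix' (g : (m → F) →ₗ[F] (m → F)) * q) *ᵥ v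
        = g (Q v) := by
      rw [← Matrix.mulVec_mulVec, ← Matrix.toLin'_apply, Matrix.toLin'_toMatrix']
      simp [hQ]
    rw [happ]
    have : Q v ∈ R := LinearMap.mem_range_self _ _
    rw [show Q v = ((⟨Q v, this⟩ : R) : m → F) from rfl, hg]
    exact Submodule.coe_mem _
  · intro w hw
    have happ : (LinearMap.toMatrix' (g : (m → F) →ₗ[F] (m → F)) * q) *ᵥ w
        = g (Q w) := by
      rw [← Matrix.mulVec_mulVec, ← Matrix.toLin'_apply, Matrix.toLin'_toMatrix']
      simp [hQ]
    rw [happ]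
    have hQw : Q w = ((eWR ⟨w, hw⟩ : R) : m → F) := (heWR ⟨w, hw⟩).symm
    rw [hQw, hg, LinearEquiv.symm_apply_apply]

/-- Core lemma: if `pᵀq = qᵀp` and `p, q` have no common kernel vector, then some
symmetric `σ` makes `p + σq` invertible (char 2). -/
private lemma core_lemma [CharP F 2] (p q : Matrix m m F)
    (hpq : pᵀ * q = qᵀ * p)
    (hker : ∀ v, p *ᵥ v = 0 → q *ᵥ v = 0 → v = 0) :
    ∃ σ : Matrix m m F, σᵀ = σ ∧ IsUnit (p + σ * q) := by
  classical
  obtain ⟨W, hWc, hWnd⟩ := exists_nondeg_compl (F := F) (LinearMap.ker q.mulVecLin)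
  obtain ⟨h, h', hh1, hh2, himW, hid⟩ := exists_refl_inv q W hWc
  have addself : ∀ X : Matrix m m F, X + X = 0 := fun X => by
    ext i j; exact CharTwo.add_self_eq_zero _
  set e : Matrix m m F := h * q with he
  have hqv : ∀ v : m → F, q.mulVecLin v = q *ᵥ v := fun v => rfl
  have hee : e * e = e := by
    have hqe : q * e = q := by
      apply mat_eq_of_mulVec
      intro v
      have h1 : e *ᵥ v ∈ W := himW v
      have h2 : e *ᵥ (e *ᵥ v) = e *ᵥ v := hid _ h1
      -- q * e *ᵥ v = q *ᵥ (e *ᵥ v); and q *ᵥ (e *ᵥ v) = q *ᵥ v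
      -- since e *ᵥ v - v? No: use that e = h*q and h is invertible:
      -- instead derive from h2 : h*(q*(e*ᵥ v)) = e *ᵥ v and multiply by h'
      rw [← Matrix.mulVec_mulVec]
      -- goal: q *ᵥ (e *ᵥ v) = q *ᵥ v
      have h3 : h' *ᵥ (e *ᵥ (e *ᵥ v)) = h' *ᵥ (e *ᵥ v) := by rw [h2]
      have h4 : ∀ u, h' *ᵥ (e *ᵥ u) = q *ᵥ u := by
        intro u
        rw [he, ← Matrix.mulVec_mulVec (M := h) (N := q), Matrix.mulVec_mulVec,
          hh2, Matrix.one_mulVec]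
      rw [h4, h4] at h3
      exact h3
    rw [he, mul_assoc h q, ← he, hqe, ← he]
  have hept : hᵀ * (h'ᵀ * p) = p := by
    rw [← mul_assoc, ← Matrix.transpose_mul, hh2, Matrix.transpose_one, one_mul]
  set p' : Matrix m m F := h'ᵀ * p with hp'
  have k1 : p'ᵀ * e = pᵀ * q := by
    rw [hp', Matrix.transpose_mul, Matrix.transpose_transpose, he]
    rw [mul_assoc, ← mul_assoc h' h q, hh2, one_mul]
  have k2 : eᵀ * p' = qᵀ * p := by
    rw [hp', he, Matrix.transpose_mul]
    rw [mul_assoc, ← mul_assoc hᵀ h'ᵀ p, ← Matrix.transpose_mul, hh2,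
      Matrix.transpose_one, one_mul]
  have k3 : p'ᵀ * e = eᵀ * p' := by rw [k1, hpq, ← k2]
  have k4 : eᵀ * p' * e = eᵀ * p' := by
    calc eᵀ * p' * e = p'ᵀ * e * e := by rw [k3]
      _ = p'ᵀ * (e * e) := mul_assoc _ _ _
      _ = p'ᵀ * e := by rw [hee]
      _ = eᵀ * p' := k3
  have k5 : eᵀ * eᵀ = eᵀ := by rw [← Matrix.transpose_mul, hee]
  set σ' : Matrix m m F := eᵀ * p' * e + eᵀ * e with hσ'
  have hσ's : σ'ᵀ = σ' := by
    rw [hσ', Matrix.transpose_add]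
    congr 1
    · calc (eᵀ * p' * e)ᵀ = eᵀ * (p'ᵀ * e) := by
            rw [Matrix.transpose_mul (eᵀ * p') e, Matrix.transpose_mul eᵀ p',
              Matrix.transpose_transpose]
        _ = eᵀ * (eᵀ * p') := by rw [k3]
        _ = eᵀ * eᵀ * p' := by rw [mul_assoc]
        _ = eᵀ * p' := by rw [k5]
        _ = eᵀ * p' * e := k4.symm
    · rw [Matrix.transpose_mul, Matrix.transpose_transpose]
  set σ : Matrix m m F := hᵀ * σ' * h with hσdef
  have hσs : σᵀ = σ := by
    rw [hσdef]
    calc (hᵀ * σ' * h)ᵀ = hᵀ * (σ'ᵀ * h) := by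
          rw [Matrix.transpose_mul (hᵀ * σ') h, Matrix.transpose_mul hᵀ σ',
            Matrix.transpose_transpose]
      _ = hᵀ * (σ' * h) := by rw [hσ's]
      _ = hᵀ * σ' * h := by rw [mul_assoc]
  have hσ'e : σ' * e = eᵀ * p' * e + eᵀ * e := by
    rw [hσ', add_mul]
    congr 1
    · rw [mul_assoc (eᵀ * p') e e, hee]
    · rw [mul_assoc eᵀ e e, hee]
  set M : Matrix m m F := p' + σ' * e with hMdef
  have hMfact : p + σ * q = hᵀ * M := by
    rw [hMdef, mul_add, hept, hσdef, he]
    congr 1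
    simp only [mul_assoc]
  have hMinj : ∀ v, M *ᵥ v = 0 → v = 0 := by
    intro v hv
    have h2 : eᵀ * M = eᵀ * e := by
      rw [hMdef, mul_add, hσ'e, mul_add]
      have e1 : eᵀ * (eᵀ * p' * e) = eᵀ * p' := by
        rw [k4, ← mul_assoc, k5]
      have e2 : eᵀ * (eᵀ * e) = eᵀ * e := by rw [← mul_assoc, k5]
      rw [e1, e2, ← add_assoc, addself, zero_add]
    have h3 : (eᵀ * e) *ᵥ v = 0 := by
      rw [← h2, ← Matrix.mulVec_mulVec, hv, Matrix.mulVec_zero]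
    have h4 : e *ᵥ v = 0 := by
      apply hWnd _ (himW v)
      intro u hu
      have hu' : e *ᵥ u = u := hid u hu
      calc u ⬝ᵥ (e *ᵥ v) = (e *ᵥ u) ⬝ᵥ (e *ᵥ v) := by rw [hu']
        _ = (u ᵥ* eᵀ) ⬝ᵥ (e *ᵥ v) := by rw [Matrix.vecMul_transpose]
        _ = u ⬝ᵥ (eᵀ *ᵥ (e *ᵥ v)) := (Matrix.dotProduct_mulVec _ _ _).symm
        _ = u ⬝ᵥ ((eᵀ * e) *ᵥ v) := by rw [Matrix.mulVec_mulVec]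
        _ = 0 := by rw [h3, dotProduct_zero]
    have h5 : p' *ᵥ v = 0 := by
      have hMv : M *ᵥ v = p' *ᵥ v := by
        rw [hMdef, Matrix.add_mulVec, hσ'e, Matrix.add_mulVec]
        have e1 : (eᵀ * p' * e) *ᵥ v = 0 := by
          rw [← Matrix.mulVec_mulVec, h4, Matrix.mulVec_zero]
        rw [e1, h3]
        simp
      rw [← hMv]; exact hv
    have h6 : p *ᵥ v = 0 := by
      have hp6 : p *ᵥ v = hᵀ *ᵥ (p' *ᵥ v) := by
        rw [Matrix.mulVec_mulVec, hept]
      rw [hp6, h5, Matrix.mulVec_zero]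
    have h7 : q *ᵥ v = 0 := by
      have h8 : h' *ᵥ (e *ᵥ v) = q *ᵥ v := by
        rw [he, ← Matrix.mulVec_mulVec (M := h) (N := q), Matrix.mulVec_mulVec,
          hh2, Matrix.one_mulVec]
      rw [← h8, h4, Matrix.mulVec_zero]
    exact hker v h6 h7
  have hMunit : IsUnit M := by
    by_contra hMnu
    have hdet : M.det = 0 := by
      by_contra hd
      exact hMnu ((Matrix.isUnit_iff_isUnit_det M).mpr (isUnit_iff_ne_zero.mpr hd))
    obtain ⟨v, hv0, hv⟩ := (Matrix.exists_mulVec_eq_zero_iff).mpr hdet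
    exact hv0 (hMinj v hv)
  have hhtu : IsUnit hᵀ := by
    refine ⟨⟨hᵀ, h'ᵀ, ?_, ?_⟩, rfl⟩
    · rw [← Matrix.transpose_mul, hh2, Matrix.transpose_one]
    · rw [← Matrix.transpose_mul, hh1, Matrix.transpose_one]
  exact ⟨σ, hσs, hMfact ▸ hhtu.mul hMunit⟩

end Helpers

section BlockB

variable {F : Type*} [Field F] {n : ℕ}

private def prFn (n : ℕ) (i : Fin (2 * n)) : Fin (2 * n) :=
  ⟨if (i : ℕ) % 2 = 0 then (i : ℕ) + 1 else (i : ℕ) - 1, by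
    have := i.isLt; split <;> omega⟩

private lemma blockB_apply (i j : Fin (2 * n)) :
    blockB F n i j = if j = prFn n i then 1 else 0 := by
  show (if (i : ℕ) / 2 = (j : ℕ) / 2 ∧ i ≠ j then (1 : F) else 0) = _
  refine if_congr ?_ rfl rfl
  rw [Fin.ext_iff, ne_eq, Fin.ext_iff]
  show ((i : ℕ) / 2 = (j : ℕ) / 2 ∧ ¬((i : ℕ) = (j : ℕ))) ↔
    (j : ℕ) = if (i : ℕ) % 2 = 0 then (i : ℕ) + 1 else (i : ℕ) - 1
  split <;> omega

private lemma prFn_prFn (i : Fin (2 * n)) : prFn n (prFn n i) = i := by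
  have := i.isLt
  apply Fin.ext
  show (if (prFn n i : ℕ) % 2 = 0 then (prFn n i : ℕ) + 1 else (prFn n i : ℕ) - 1) = (i : ℕ)
  show (if (if (i : ℕ) % 2 = 0 then (i : ℕ) + 1 else (i : ℕ) - 1) % 2 = 0
    then (if (i : ℕ) % 2 = 0 then (i : ℕ) + 1 else (i : ℕ) - 1) + 1
    else (if (i : ℕ) % 2 = 0 then (i : ℕ) + 1 else (i : ℕ) - 1) - 1) = (i : ℕ)
  split <;> split <;> omega

private lemma blockB_transpose : (blockB F n)ᵀ = blockB F n := by
  ext i j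
  show (if (j : ℕ) / 2 = (i : ℕ) / 2 ∧ j ≠ i then (1 : F) else 0)
    = (if (i : ℕ) / 2 = (j : ℕ) / 2 ∧ i ≠ j then (1 : F) else 0)
  refine if_congr ?_ rfl rfl
  exact ⟨fun ⟨h1, h2⟩ => ⟨h1.symm, h2.symm⟩, fun ⟨h1, h2⟩ => ⟨h1.symm, h2.symm⟩⟩

private lemma blockB_mul_self : blockB F n * blockB F n = 1 := by
  ext i k
  rw [Matrix.mul_apply]
  simp only [blockB_apply]
  rw [Finset.sum_eq_single (prFn n i)]
  · rw [if_pos rfl, one_mul, prFn_prFn, Matrix.one_apply]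
    exact if_congr eq_comm rfl rfl
  · intro j _ hj
    rw [if_neg hj, zero_mul]
  · intro hm; exact absurd (Finset.mem_univ _) hm

end BlockB

/-- over a field of characteristic 2, A = M(2n,F) with the
involution a* = B aᵗ B (B block diagonal with copies of J = [[0,1],[1,0]],
B = B⁻¹) is *-Euclidean of decomposition length 1: for a, c with
Aa + Ac = A and a*c = c*a there is a symmetric s with a + sc invertible. -/
theorem stmt12 (F : Type*) [Field F] [CharP F 2] (n : ℕ) (hn : 1 ≤ n)
    (a c : Matrix (Fin (2 * n)) (Fin (2 * n)) F)
    (hcop : ∃ x y : Matrix (Fin (2 * n)) (Fin (2 * n)) F, x * a + y * c = 1)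
    (hsym : blockB F n * aᵀ * blockB F n * c = blockB F n * cᵀ * blockB F n * a) :
    ∃ s : Matrix (Fin (2 * n)) (Fin (2 * n)) F,
      blockB F n * sᵀ * blockB F n = s ∧ IsUnit (a + s * c) := by
  classical
  set B := blockB F n with hB
  have hBt : Bᵀ = B := blockB_transpose
  have hBB : B * B = 1 := blockB_mul_self
  have hBu : IsUnit B := ⟨⟨B, B, hBB, hBB⟩, rfl⟩
  obtain ⟨x, y, hxy⟩ := hcop
  have hsym' : aᵀ * B * c = cᵀ * B * a := by
    have h2 := congrArg (fun z => B * z) hsym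
    simp only [← mul_assoc] at h2
    -- h2 : B * B * aᵀ * B * c = B * B * cᵀ * B * a
    rw [hBB, one_mul, one_mul] at h2
    exact h2
  have hpq : (B * a)ᵀ * c = cᵀ * (B * a) := by
    rw [Matrix.transpose_mul, hBt, mul_assoc, ← mul_assoc aᵀ B c, hsym',
      mul_assoc]
  have hker : ∀ v, (B * a) *ᵥ v = 0 → c *ᵥ v = 0 → v = 0 := by
    intro v h1 h2
    have ha : a *ᵥ v = 0 := by
      have hav : a *ᵥ v = B *ᵥ ((B * a) *ᵥ v) := by
        rw [Matrix.mulVec_mulVec, ← mul_assoc, hBB, one_mul]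
      rw [hav, h1, Matrix.mulVec_zero]
    have hv : v = (x * a + y * c) *ᵥ v := by rw [hxy, Matrix.one_mulVec]
    rw [Matrix.add_mulVec, ← Matrix.mulVec_mulVec, ← Matrix.mulVec_mulVec,
      ha, h2, Matrix.mulVec_zero, Matrix.mulVec_zero, add_zero] at hv
    exact hv
  obtain ⟨σ, hσs, hσu⟩ := core_lemma (B * a) c hpq hker
  refine ⟨B * σ, ?_, ?_⟩
  · rw [Matrix.transpose_mul, hσs, hBt]
    calc B * (σ * B) * B = B * σ * (B * B) := by simp only [mul_assoc]
      _ = B * σ := by rw [hBB, mul_one]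
  · have hfact : a + B * σ * c = B * ((B * a) + σ * c) := by
      rw [mul_add, ← mul_assoc, hBB, one_mul, ← mul_assoc]
    rw [hfact]
    exact hBu.mul hσu
end

section
/- Let (A,*) be a ring with involution and SL_*(2, A) the group of 2×2 matrices g = [[a,b],[c,d]] over A with ad* − bc* = a*d − c*b = 1 and ab*, cd*, a*c, b*d all symmetric. If g ∈ SL_*(2, A) has invertible upper-left entry a ∈ A×, then g = w⁻¹ h_{a}⁻¹ u_{−a*c} w u_{a⁻¹b}, where w = [[0,1],[−1,0]], h_x = [[x*,0],[0,x⁻¹]] for x ∈ A×, and u_b = [[1,b],[0,1]] for b ∈ A^sym. Moreover a⁻¹b and −a*c are symmetric, so all factors are Bruhat elements of SL_*(2, A). -/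
open Matrix

set_option maxHeartbeats 1000000 in
/-- an element g = [[a,b],[c,d]] of SL_*(2,A) whose upper-left
entry a is invertible factors as g = w⁻¹ h_a⁻¹ u_{-a*c} w u_{a⁻¹b}, and
a⁻¹b (and -a*c) are symmetric, so all factors are Bruhat elements. -/
theorem stmt13 (A : Type*) [Ring A] [StarRing A] (a b c d : A)
    (ha : IsUnit a)
    (h1 : a * star d - b * star c = 1)
    (h2 : star a * d - star c * b = 1)
    (h3 : star (a * star b) = a * star b)
    (h4 : star (c * star d) = c * star d)
    (h5 : star (star a * c) = star a * c)
    (h6 : star (star b * d) = star b * d) :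
    star (Ring.inverse a * b) = Ring.inverse a * b ∧
    star (-(star a * c)) = -(star a * c) ∧
    (!![a, b; c, d] : Matrix (Fin 2) (Fin 2) A) =
      !![0, -1; 1, 0] * !![Ring.inverse (star a), 0; 0, a] *
      !![1, -(star a * c); 0, 1] * !![0, 1; -1, 0] *
      !![1, Ring.inverse a * b; 0, 1] := by
  have ha' : IsUnit (star a) := ha.star
  have hinv : a * Ring.inverse a = 1 := Ring.mul_inverse_cancel a ha
  have hinv' : Ring.inverse a * a = 1 := Ring.inverse_mul_cancel a ha
  have hsinv : star a * Ring.inverse (star a) = 1 := Ring.mul_inverse_cancel _ ha'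
  have hsinv' : Ring.inverse (star a) * star a = 1 := Ring.inverse_mul_cancel _ ha'
  -- h3 says b * star a = a * star b
  have h3' : b * star a = a * star b := by
    have := h3; rwa [StarMul.star_mul, star_star] at this
  -- part 1
  have p1 : star (Ring.inverse a * b) = Ring.inverse a * b := by
    have key : a * (star (Ring.inverse a * b)) * star a = a * (Ring.inverse a * b) * star a := by
      rw [StarMul.star_mul, ← Ring.inverse_star]
      calc a * (star b * Ring.inverse (star a)) * star a
          = a * star b * (Ring.inverse (star a) * star a) := by noncomm_ring
        _ = a * star b := by rw [hsinv', mul_one]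
        _ = b * star a := h3'.symm
        _ = a * (Ring.inverse a * b) * star a := by
            rw [← mul_assoc, hinv, one_mul]

    have key2 : star (Ring.inverse a * b) * star a = (Ring.inverse a * b) * star a := by
      have := congrArg (fun x => Ring.inverse a * x) key
      simpa [← mul_assoc, hinv'] using this
    have := congrArg (fun x => x * Ring.inverse (star a)) key2
    simpa [mul_assoc, hsinv] using this
  -- h5 gives star c * a = star a * c
  have h5' : star c * a = star a * c := by
    have := h5; rwa [StarMul.star_mul, star_star] at this
  -- d from h2
  have hd : d = Ring.inverse (star a) + Ring.inverse (star a) * (star c * b) := by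
    have : star a * d = 1 + star c * b := by
      have := h2; rwa [sub_eq_iff_eq_add] at this
    have := congrArg (fun x => Ring.inverse (star a) * x) this
    simpa [← mul_assoc, hsinv', mul_add] using this
  have hcab : c * (Ring.inverse a * b) = Ring.inverse (star a) * (star c * b) := by
    have hca : c * Ring.inverse a = Ring.inverse (star a) * star c := by
      have : star a * (c * Ring.inverse a) = star a * (Ring.inverse (star a) * star c) := by
        rw [← mul_assoc, ← h5', mul_assoc, hinv, mul_one, ← mul_assoc, hsinv, one_mul]
      have := congrArg (fun x => Ring.inverse (star a) * x) this
      simpa [← mul_assoc, hsinv', one_mul] using this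
    rw [← mul_assoc, hca, mul_assoc]
  refine ⟨p1, by rw [star_neg, h5], ?_⟩
  ext i j
  fin_cases i <;> fin_cases j <;>
    simp [Matrix.mul_apply, Fin.sum_univ_succ]
  · rw [← mul_assoc, hinv, one_mul]
  · rw [← mul_assoc, hsinv', one_mul]
  · have e1 : Ring.inverse (star a) * (star a * c) = c := by
      rw [← mul_assoc, hsinv', one_mul]
    rw [e1, hcab]; exact hd.trans (add_comm _ _)
end

section
/- Let A₁ = M(2n, R₁) and A₂ = M(2n, R₂) for rings R₁, R₂ linked by an anti-isomorphism φ extended entrywise, and let A = A₁ × A₂ with the φ-flip transpose involution a* = (φ⁻¹(a₂)ᵗ, φ(a₁)ᵗ). Then the map g₀ ↦ (g₀, J(φ(g₀)⁻¹)ᵗ J⁻¹) is a group isomorphism from GL(2, A₁) onto SL_*(2, A), where entries of 2×2 matrices over A are interpreted componentwise. -/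
open Matrix

variable {R : Type*} [CommRing R] {n : ℕ}

/-- M = M(2n, R). -/
abbrev MatR (R : Type*) [CommRing R] (n : ℕ) := Matrix (Fin (2 * n)) (Fin (2 * n)) R

/-- A = M × M with (taking R₁ = R₂ = R and φ = id) the flip transpose
involution (a₁, a₂)* = (a₂ᵗ, a₁ᵗ). -/
def invA (a : MatR R n × MatR R n) : MatR R n × MatR R n := (a.2ᵀ, a.1ᵀ)

/-- The induced involution on 2×2 matrices over A: g* = ((g j i)*)_{i j}. -/
def invA2 (g : Matrix (Fin 2) (Fin 2) (MatR R n × MatR R n)) :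
    Matrix (Fin 2) (Fin 2) (MatR R n × MatR R n) :=
  Matrix.of fun i j => invA (g j i)

/-- J = [[0,1],[-1,0]] over A. -/
def JA (R : Type*) [CommRing R] (n : ℕ) :
    Matrix (Fin 2) (Fin 2) (MatR R n × MatR R n) := !![0, 1; -1, 0]

/-- det_* on M(2, A). -/
def detStarA (g : Matrix (Fin 2) (Fin 2) (MatR R n × MatR R n)) :
    MatR R n × MatR R n :=
  g 0 0 * invA (g 1 1) - g 0 1 * invA (g 1 0)

/-- g ∈ SL_*(2, A): g* J g = J and det_* g = 1. -/
def SLstarA (g : Matrix (Fin 2) (Fin 2) (MatR R n × MatR R n)) : Prop :=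
  invA2 g * JA R n * g = JA R n ∧ detStarA g = 1

/-- The transpose-at-both-levels map on 2×2 matrices over M (the "ᵗ" of the
formula g₀ ↦ (g₀, J(g₀⁻¹)ᵗJ⁻¹), interpreted componentwise). -/
def sigT (g : Matrix (Fin 2) (Fin 2) (MatR R n)) :
    Matrix (Fin 2) (Fin 2) (MatR R n) :=
  Matrix.of fun i j => (g j i)ᵀ

/-- The map g₀ ↦ (g₀, J(g₀⁻¹)ᵗJ⁻¹) from 2×2 matrices over A₁ = M to 2×2
matrices over A = A₁ × A₂, entries interpreted componentwise. -/
noncomputable def Phi (g₀ : Matrix (Fin 2) (Fin 2) (MatR R n)) :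
    Matrix (Fin 2) (Fin 2) (MatR R n × MatR R n) :=
  Matrix.of fun i j =>
    (g₀ i j,
      ((!![0, 1; -1, 0] : Matrix (Fin 2) (Fin 2) (MatR R n)) *
        sigT (Ring.inverse g₀) *
        (!![0, -1; 1, 0] : Matrix (Fin 2) (Fin 2) (MatR R n))) i j)

/-
Write `g ∈ M(2, A)` as a pair `(a, b)` of `2 × 2` matrices over `M = M(2n, R)`, and let
`σ(X) = J Xᵗ J⁻¹` (`sympAdj`), an involutive anti-automorphism of `M(2, M)`. Since `*` swaps
the two components and transposes, `g* J g = J` says `σ(b) a = 1` and `σ(a) b = 1`. Over a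
commutative base ring a one-sided inverse in `M(2, M) ≅ M(4n, R)` is two-sided, so `σ(b) a = 1`
alone already forces the second equation and `det_* g = 1`. Hence `SL_*(2, A)` is the graph of
`a ↦ σ(a⁻¹)` over `GL(2, M)`, which is the map `Phi`.
-/

section ProdMatrix

variable {m α β : Type*} [Fintype m] [DecidableEq m] [Semiring α] [Semiring β]

abbrev fstMat : Matrix m m (α × β) →+* Matrix m m α := (RingHom.fst α β).mapMatrix

abbrev sndMat : Matrix m m (α × β) →+* Matrix m m β := (RingHom.snd α β).mapMatrix

theorem Matrix.ext_iff_fstMat_sndMat {g h : Matrix m m (α × β)} :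
    g = h ↔ fstMat g = fstMat h ∧ sndMat g = sndMat h := by
  refine ⟨fun hgh => hgh ▸ ⟨rfl, rfl⟩, fun ⟨h₁, h₂⟩ => ?_⟩
  ext i j : 1
  exact Prod.ext (congrFun₂ h₁ i j) (congrFun₂ h₂ i j)

end ProdMatrix

def symplJ (R : Type*) [CommRing R] (n : ℕ) : Matrix (Fin 2) (Fin 2) (MatR R n) :=
  !![0, 1; -1, 0]

theorem symplJ_mul_self : symplJ R n * symplJ R n = -1 := by
  rw [symplJ, Matrix.mul_fin_two, Matrix.one_fin_two]
  norm_num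

theorem symplJ_mul_symplJ_mul (X : Matrix (Fin 2) (Fin 2) (MatR R n)) :
    symplJ R n * (symplJ R n * X) = -X := by
  rw [← Matrix.mul_assoc, symplJ_mul_self, Matrix.neg_mul, Matrix.one_mul]

theorem neg_symplJ : -symplJ R n = !![0, -1; 1, 0] := by
  rw [symplJ]
  norm_num

def symplJUnit (R : Type*) [CommRing R] (n : ℕ) : (Matrix (Fin 2) (Fin 2) (MatR R n))ˣ where
  val := symplJ R n
  inv := -symplJ R n
  val_inv := by rw [mul_neg, symplJ_mul_self, neg_neg]
  inv_val := by rw [neg_mul, symplJ_mul_self, neg_neg]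

theorem sigT_mul (a b : Matrix (Fin 2) (Fin 2) (MatR R n)) :
    sigT (a * b) = sigT b * sigT a := by
  ext i j
  simp [sigT, Matrix.mul_apply, Matrix.transpose_mul]

theorem sigT_one : sigT (1 : Matrix (Fin 2) (Fin 2) (MatR R n)) = 1 := by
  ext i j
  by_cases h : i = j <;> simp [sigT, Matrix.one_apply, h, eq_comm]

theorem sigT_sigT (a : Matrix (Fin 2) (Fin 2) (MatR R n)) : sigT (sigT a) = a := by
  ext i j
  simp [sigT]

theorem sigT_neg (a : Matrix (Fin 2) (Fin 2) (MatR R n)) : sigT (-a) = -sigT a := by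
  ext i j
  simp [sigT]

theorem sigT_symplJ : sigT (symplJ R n) = -symplJ R n := by
  ext i j : 1
  fin_cases i <;> fin_cases j <;> simp [sigT, symplJ]

def sympAdj (X : Matrix (Fin 2) (Fin 2) (MatR R n)) : Matrix (Fin 2) (Fin 2) (MatR R n) :=
  symplJ R n * sigT X * -symplJ R n

theorem sympAdj_mul (a b : Matrix (Fin 2) (Fin 2) (MatR R n)) :
    sympAdj (a * b) = sympAdj b * sympAdj a := by
  simp only [sympAdj, sigT_mul, Matrix.mul_assoc, Matrix.neg_mul, Matrix.mul_neg,
    symplJ_mul_symplJ_mul, neg_neg]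

theorem sympAdj_one : sympAdj (1 : Matrix (Fin 2) (Fin 2) (MatR R n)) = 1 := by
  rw [sympAdj, sigT_one, Matrix.mul_one, Matrix.mul_neg, symplJ_mul_self, neg_neg]

theorem sympAdj_sympAdj (a : Matrix (Fin 2) (Fin 2) (MatR R n)) : sympAdj (sympAdj a) = a := by
  simp only [sympAdj, sigT_mul, sigT_sigT, sigT_symplJ, sigT_neg, Matrix.mul_assoc,
    Matrix.neg_mul, Matrix.mul_neg, symplJ_mul_self, symplJ_mul_symplJ_mul, Matrix.mul_one,
    neg_neg]

theorem sympAdj_eq_entries (X : Matrix (Fin 2) (Fin 2) (MatR R n)) :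
    sympAdj X = !![(X 1 1)ᵀ, -(X 0 1)ᵀ; -(X 1 0)ᵀ, (X 0 0)ᵀ] := by
  ext i j : 2
  fin_cases i <;> fin_cases j <;>
    simp [sympAdj, symplJ, sigT, Matrix.mul_apply, Fin.sum_univ_two, Matrix.vecHead,
      Matrix.vecTail]

theorem sympAdj_mul_eq_one_comm {a b : Matrix (Fin 2) (Fin 2) (MatR R n)} :
    sympAdj b * a = 1 ↔ sympAdj a * b = 1 := by
  suffices h : ∀ a b : Matrix (Fin 2) (Fin 2) (MatR R n),
      sympAdj b * a = 1 → sympAdj a * b = 1 from ⟨h a b, h b a⟩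
  intro a b hba
  -- `M(2, M(2n, R)) ≅ M(4n, R)` is Dedekind-finite since `R` is commutative.
  have hab : a * sympAdj b = 1 := mul_eq_one_comm.mp hba
  apply mul_eq_one_comm.mp
  simpa only [sympAdj_mul, sympAdj_sympAdj, sympAdj_one] using congrArg sympAdj hab

theorem sigT_mul_symplJ_mul_eq_symplJ_iff {a b : Matrix (Fin 2) (Fin 2) (MatR R n)} :
    sigT b * symplJ R n * a = symplJ R n ↔ sympAdj b * a = 1 := by
  have h : sympAdj b * a =
      ((symplJUnit R n)⁻¹ : (Matrix (Fin 2) (Fin 2) (MatR R n))ˣ) * (sigT b * symplJ R n * a) := by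
    simp only [sympAdj, symplJUnit, Units.inv_mk, Matrix.mul_assoc, Matrix.mul_neg,
      Matrix.neg_mul]
  rw [h, Units.inv_mul_eq_one, eq_comm]
  rfl

theorem fstMat_Phi (g₀ : Matrix (Fin 2) (Fin 2) (MatR R n)) : fstMat (Phi g₀) = g₀ := rfl

theorem sndMat_Phi (g₀ : Matrix (Fin 2) (Fin 2) (MatR R n)) :
    sndMat (Phi g₀) = sympAdj (Ring.inverse g₀) := by
  rw [sympAdj, neg_symplJ]
  rfl

theorem fstMat_JA : fstMat (JA R n) = symplJ R n := by
  ext i j : 1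
  fin_cases i <;> fin_cases j <;> rfl

theorem sndMat_JA : sndMat (JA R n) = symplJ R n := by
  ext i j : 1
  fin_cases i <;> fin_cases j <;> rfl

theorem fstMat_invA2 (g : Matrix (Fin 2) (Fin 2) (MatR R n × MatR R n)) :
    fstMat (invA2 g) = sigT (sndMat g) := rfl

theorem sndMat_invA2 (g : Matrix (Fin 2) (Fin 2) (MatR R n × MatR R n)) :
    sndMat (invA2 g) = sigT (fstMat g) := rfl

theorem detStarA_eq_mul_sympAdj (g : Matrix (Fin 2) (Fin 2) (MatR R n × MatR R n)) :
    detStarA g = ((fstMat g * sympAdj (sndMat g)) 0 0, (sndMat g * sympAdj (fstMat g)) 0 0) := by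
  ext <;>
    simp [detStarA, invA, sympAdj_eq_entries, Matrix.mul_apply, Fin.sum_univ_two, sub_eq_add_neg]

theorem slStarA_iff (g : Matrix (Fin 2) (Fin 2) (MatR R n × MatR R n)) :
    SLstarA g ↔ sympAdj (sndMat g) * fstMat g = 1 := by
  rw [SLstarA, Matrix.ext_iff_fstMat_sndMat, map_mul, map_mul, map_mul, map_mul, fstMat_invA2,
    sndMat_invA2, fstMat_JA, sndMat_JA, sigT_mul_symplJ_mul_eq_symplJ_iff,
    sigT_mul_symplJ_mul_eq_symplJ_iff, detStarA_eq_mul_sympAdj, Prod.mk_eq_one]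
  refine ⟨fun h => h.1.1, fun h => ⟨⟨h, sympAdj_mul_eq_one_comm.mp h⟩, ?_, ?_⟩⟩
  · rw [mul_eq_one_comm.mp h, Matrix.one_apply_eq]
  · rw [mul_eq_one_comm.mp (sympAdj_mul_eq_one_comm.mp h), Matrix.one_apply_eq]

/-- g₀ ↦ (g₀, J(φ(g₀)⁻¹)ᵗJ⁻¹) is a group isomorphism from
GL(2, A₁) onto SL_*(2, A) (here R₁ = R₂ = R commutative and φ = id). -/
theorem stmt16 (R : Type*) [CommRing R] (n : ℕ) :
    (∀ g₀ : Matrix (Fin 2) (Fin 2) (MatR R n), IsUnit g₀ → SLstarA (Phi g₀)) ∧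
    (∀ g₀ g₁ : Matrix (Fin 2) (Fin 2) (MatR R n), IsUnit g₀ → IsUnit g₁ →
      Phi (g₀ * g₁) = Phi g₀ * Phi g₁) ∧
    (∀ g₀ g₁ : Matrix (Fin 2) (Fin 2) (MatR R n), IsUnit g₀ → IsUnit g₁ →
      Phi g₀ = Phi g₁ → g₀ = g₁) ∧
    (∀ g : Matrix (Fin 2) (Fin 2) (MatR R n × MatR R n), SLstarA g →
      ∃ g₀ : Matrix (Fin 2) (Fin 2) (MatR R n), IsUnit g₀ ∧ Phi g₀ = g) := by
  refine ⟨fun g₀ hg₀ => ?_, fun g₀ g₁ hg₀ _ => ?_, fun g₀ g₁ _ _ h => congrArg fstMat h,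
    fun g hg => ?_⟩
  · rw [slStarA_iff, sndMat_Phi, sympAdj_sympAdj, fstMat_Phi, Ring.inverse_mul_cancel _ hg₀]
  · rw [Matrix.ext_iff_fstMat_sndMat, map_mul, map_mul, fstMat_Phi, fstMat_Phi, fstMat_Phi,
      sndMat_Phi, sndMat_Phi, sndMat_Phi, Ring.inverse_mul (.inl hg₀), sympAdj_mul]
    exact ⟨rfl, rfl⟩
  · rw [slStarA_iff] at hg
    let u : (Matrix (Fin 2) (Fin 2) (MatR R n))ˣ :=
      ⟨fstMat g, sympAdj (sndMat g), mul_eq_one_comm.mp hg, hg⟩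
    refine ⟨fstMat g, u.isUnit, Matrix.ext_iff_fstMat_sndMat.mpr ⟨rfl, ?_⟩⟩
    rw [sndMat_Phi, show fstMat g = u from rfl, Ring.inverse_unit]
    exact sympAdj_sympAdj _
end

section
/- Let R be a local ring of characteristic 2 with maximal ideal 𝔭, let Q = M(2, R) with involution h* = J hᵗ J⁻¹ (J = [[0,1],[1,0]]), and let A = M(n, Q) with the induced involution. Then A is *-Euclidean of decomposition length 1: for all a, c ∈ A with Aa + Ac = A and a*c = c*a, there exist s ∈ A^sym and r ∈ A× with a = sc + r. -/
open Matrix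

/-- The involution h ↦ J hᵗ J⁻¹ on Q = M(2,R), J = [[0,1],[1,0]] = J⁻¹
(characteristic 2). -/
def starQ2 {R : Type*} [CommRing R] (h : Matrix (Fin 2) (Fin 2) R) :
    Matrix (Fin 2) (Fin 2) R :=
  (!![0, 1; 1, 0] : Matrix (Fin 2) (Fin 2) R) * hᵀ *
    (!![0, 1; 1, 0] : Matrix (Fin 2) (Fin 2) R)

/-- The induced involution a* = ((a j i)*)_{i j} on A = M(n, Q). -/
def invA19 {R : Type*} [CommRing R] {n : ℕ}
    (a : Matrix (Fin n) (Fin n) (Matrix (Fin 2) (Fin 2) R)) :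
    Matrix (Fin n) (Fin n) (Matrix (Fin 2) (Fin 2) R) :=
  Matrix.of fun i j => starQ2 (a j i)


set_option linter.unusedSectionVars false
set_option maxHeartbeats 1000000

open Module Submodule

section Symplectic

variable {K W : Type*} [Field K] [AddCommGroup W] [Module K W] [FiniteDimensional K W]
variable (Ω : LinearMap.BilinForm K W)

/-- orthogonal of a sup is the inf of orthogonals -/
lemma orth_sup (M N : Submodule K W) :
    Ω.orthogonal (M ⊔ N) = Ω.orthogonal M ⊓ Ω.orthogonal N := by
  ext x
  simp only [LinearMap.BilinForm.mem_orthogonal_iff, Submodule.mem_inf]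
  constructor
  · intro h
    exact ⟨fun m hm => h m (Submodule.mem_sup_left hm),
      fun nn hn => h nn (Submodule.mem_sup_right hn)⟩
  · rintro ⟨h1, h2⟩ y hy
    rcases Submodule.mem_sup.1 hy with ⟨m, hm, nn, hn, rfl⟩
    have e1 : Ω m x = 0 := h1 m hm
    have e2 : Ω nn x = 0 := h2 nn hn
    show Ω (m + nn) x = 0
    rw [map_add, LinearMap.add_apply, e1, e2, add_zero]

/-- a vector space is not the union of two proper subspaces -/
lemma avoid_two (P A1 A2 : Submodule K W) (h1 : ¬ P ≤ A1) (h2 : ¬ P ≤ A2) :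
    ∃ v ∈ P, v ∉ A1 ∧ v ∉ A2 := by
  obtain ⟨x, hxP, hxA1⟩ := SetLike.not_le_iff_exists.1 h1
  obtain ⟨y, hyP, hyA2⟩ := SetLike.not_le_iff_exists.1 h2
  by_cases hxA2 : x ∈ A2
  · by_cases hyA1 : y ∈ A1
    · refine ⟨x + y, add_mem hxP hyP, ?_, ?_⟩
      · intro h; exact hxA1 (by simpa using sub_mem h hyA1)
      · intro h; exact hyA2 (by simpa using sub_mem h hxA2)
    · exact ⟨y, hyP, hyA1, hyA2⟩
  · exact ⟨x, hxP, hxA1, hxA2⟩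

variable {Ω}

lemma not_le_sup (halt : Ω.IsAlt) (hnd : Ω.Nondegenerate)
    {L M : Submodule K W}
    (hLo : L ≤ Ω.orthogonal L) (hLd : 2 * finrank K L = finrank K W)
    (hML : M ⊓ L = ⊥) (hlt : 2 * finrank K M < finrank K W) :
    ¬ Ω.orthogonal M ≤ M ⊔ L := by
  intro hle
  have hrefl : Ω.IsRefl := halt.isRefl
  have key : Ω.orthogonal M ⊓ L ≤ M := by
    have h1 : Ω.orthogonal M ⊓ L ≤ Ω.orthogonal (M ⊔ L) := by
      rw [orth_sup]
      exact inf_le_inf_left _ hLo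
    have h2 : Ω.orthogonal (M ⊔ L) ≤ Ω.orthogonal (Ω.orthogonal M) :=
      LinearMap.BilinForm.orthogonal_le hle
    rw [LinearMap.BilinForm.orthogonal_orthogonal hnd hrefl] at h2
    exact h1.trans h2
  have hbot : Ω.orthogonal M ⊓ L = ⊥ := by
    rw [← le_bot_iff, ← hML]
    exact le_inf key inf_le_right
  have hdim := Submodule.finrank_sup_add_finrank_inf_eq (Ω.orthogonal M) L
  rw [hbot] at hdim
  have h3 : finrank K (Ω.orthogonal M) = finrank K W - finrank K M :=
    LinearMap.BilinForm.finrank_orthogonal hnd M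
  have h4 : finrank K ↥(Ω.orthogonal M ⊔ L) ≤ finrank K W := Submodule.finrank_le _
  have h5 : finrank K M ≤ finrank K W := Submodule.finrank_le _
  simp only [finrank_bot, add_zero] at hdim
  omega

lemma extension_step (halt : Ω.IsAlt) (hnd : Ω.Nondegenerate)
    {L1 L2 M : Submodule K W}
    (h1o : L1 ≤ Ω.orthogonal L1) (h1d : 2 * finrank K L1 = finrank K W)
    (h2o : L2 ≤ Ω.orthogonal L2) (h2d : 2 * finrank K L2 = finrank K W)
    (hMo : M ≤ Ω.orthogonal M) (hM1 : M ⊓ L1 = ⊥) (hM2 : M ⊓ L2 = ⊥)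
    (hlt : 2 * finrank K M < finrank K W) :
    ∃ M' : Submodule K W, M' ≤ Ω.orthogonal M' ∧ M' ⊓ L1 = ⊥ ∧ M' ⊓ L2 = ⊥ ∧
      finrank K M' = finrank K M + 1 := by
  obtain ⟨v, hvP, hv1, hv2⟩ := avoid_two (Ω.orthogonal M) ((Ω.orthogonal M) ⊓ (M ⊔ L1))
    ((Ω.orthogonal M) ⊓ (M ⊔ L2))
    (fun h => not_le_sup halt hnd h1o h1d hM1 hlt (fun x hx => (h hx).2))
    (fun h => not_le_sup halt hnd h2o h2d hM2 hlt (fun x hx => (h hx).2))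
  have hv1' : v ∉ M ⊔ L1 := fun h => hv1 ⟨hvP, h⟩
  have hv2' : v ∉ M ⊔ L2 := fun h => hv2 ⟨hvP, h⟩
  have hvM : v ∉ M := fun h => hv1' (Submodule.mem_sup_left h)
  have hv0 : v ≠ 0 := fun h => hvM (h ▸ zero_mem M)
  refine ⟨M ⊔ K ∙ v, ?_, ?_, ?_, ?_⟩
  · -- isotropic
    intro x hx
    rcases Submodule.mem_sup.1 hx with ⟨m, hm, z, hz, rfl⟩
    rcases Submodule.mem_span_singleton.1 hz with ⟨t, rfl⟩
    intro y hy
    rcases Submodule.mem_sup.1 hy with ⟨m', hm', z', hz', rfl⟩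
    rcases Submodule.mem_span_singleton.1 hz' with ⟨t', rfl⟩
    have hmm : Ω m' m = 0 := hMo hm m' hm'
    have hmv : Ω m' v = 0 := hvP m' hm'
    have hvm : Ω v m = 0 := halt.isRefl _ _ (hvP m hm)
    have hvv : Ω v v = 0 := halt v
    simp only [LinearMap.BilinForm.IsOrtho, _root_.map_add, _root_.map_smul, LinearMap.add_apply,
      LinearMap.smul_apply, smul_eq_mul]
    rw [hmm, hmv, hvm, hvv]
    ring
  · -- transverse to L1
    rw [eq_bot_iff]
    rintro x ⟨hx, hxL⟩
    rcases Submodule.mem_sup.1 hx with ⟨m, hm, z, hz, rfl⟩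
    rcases Submodule.mem_span_singleton.1 hz with ⟨t, rfl⟩
    by_cases ht : t = 0
    · subst ht
      simp only [zero_smul, add_zero] at hxL ⊢
      have : m ∈ M ⊓ L1 := ⟨hm, hxL⟩
      rw [hM1] at this
      exact this
    · exfalso
      apply hv1'
      have : v = t⁻¹ • ((m + t • v) - m) := by
        rw [add_sub_cancel_left, smul_smul, inv_mul_cancel₀ ht, one_smul]
      rw [this]
      exact Submodule.smul_mem _ _ (sub_mem
        (Submodule.mem_sup_right hxL) (Submodule.mem_sup_left hm))
  · -- transverse to L2
    rw [eq_bot_iff]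
    rintro x ⟨hx, hxL⟩
    rcases Submodule.mem_sup.1 hx with ⟨m, hm, z, hz, rfl⟩
    rcases Submodule.mem_span_singleton.1 hz with ⟨t, rfl⟩
    by_cases ht : t = 0
    · subst ht
      simp only [zero_smul, add_zero] at hxL ⊢
      have : m ∈ M ⊓ L2 := ⟨hm, hxL⟩
      rw [hM2] at this
      exact this
    · exfalso
      apply hv2'
      have : v = t⁻¹ • ((m + t • v) - m) := by
        rw [add_sub_cancel_left, smul_smul, inv_mul_cancel₀ ht, one_smul]
      rw [this]
      exact Submodule.smul_mem _ _ (sub_mem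
        (Submodule.mem_sup_right hxL) (Submodule.mem_sup_left hm))
  · -- dimension
    have hinf : M ⊓ (K ∙ v) = ⊥ := by
      rw [eq_bot_iff]
      rintro x ⟨hx, hz⟩
      rcases Submodule.mem_span_singleton.1 hz with ⟨t, rfl⟩
      by_cases ht : t = 0
      · subst ht; simp
      · exfalso
        have h6 := Submodule.smul_mem M t⁻¹ hx
        rw [smul_smul, inv_mul_cancel₀ ht, one_smul] at h6
        exact hvM h6
    have := Submodule.finrank_sup_add_finrank_inf_eq M (K ∙ v)
    rw [hinf, finrank_span_singleton hv0] at this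
    simp only [finrank_bot, add_zero] at this
    omega

/-- common transverse Lagrangian -/
theorem exists_transverse_lagrangian (halt : Ω.IsAlt) (hnd : Ω.Nondegenerate)
    {L1 L2 : Submodule K W}
    (h1o : L1 ≤ Ω.orthogonal L1) (h1d : 2 * finrank K L1 = finrank K W)
    (h2o : L2 ≤ Ω.orthogonal L2) (h2d : 2 * finrank K L2 = finrank K W) :
    ∃ M : Submodule K W, M ≤ Ω.orthogonal M ∧ 2 * finrank K M = finrank K W ∧
      M ⊓ L1 = ⊥ ∧ M ⊓ L2 = ⊥ := by
  have hrefl : Ω.IsRefl := halt.isRefl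
  suffices h : ∀ d : ℕ, ∀ M : Submodule K W, finrank K W ≤ 2 * finrank K M + d →
      M ≤ Ω.orthogonal M → M ⊓ L1 = ⊥ → M ⊓ L2 = ⊥ →
      ∃ M' : Submodule K W, M' ≤ Ω.orthogonal M' ∧ 2 * finrank K M' = finrank K W ∧
        M' ⊓ L1 = ⊥ ∧ M' ⊓ L2 = ⊥ by
    exact h (finrank K W) ⊥ (by simp) (by simp) (by simp) (by simp)
  intro d
  induction d with
  | zero =>
    intro M hd hMo hM1 hM2
    refine ⟨M, hMo, ?_, hM1, hM2⟩
    have h1 : finrank K M ≤ finrank K (Ω.orthogonal M) := by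
      apply Submodule.finrank_mono hMo
    rw [LinearMap.BilinForm.finrank_orthogonal hnd] at h1
    have h5 : finrank K M ≤ finrank K W := Submodule.finrank_le _
    omega
  | succ d ih =>
    intro M hd hMo hM1 hM2
    by_cases hlt : 2 * finrank K M < finrank K W
    · obtain ⟨M', hM'o, hM'1, hM'2, hM'd⟩ :=
        extension_step halt hnd h1o h1d h2o h2d hMo hM1 hM2 hlt
      exact ih M' (by omega) hM'o hM'1 hM'2
    · refine ⟨M, hMo, ?_, hM1, hM2⟩
      have h1 : finrank K M ≤ finrank K (Ω.orthogonal M) := Submodule.finrank_mono hMo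
      rw [LinearMap.BilinForm.finrank_orthogonal hnd] at h1
      have h5 : finrank K M ≤ finrank K W := Submodule.finrank_le _
      omega

end Symplectic

section FieldCase

open Module Matrix

variable {k : Type*} [Field k] {I : Type*} [Fintype I] [DecidableEq I]

lemma dot_shift (B : Matrix I I k) (u v : I → k) :
    u ⬝ᵥ B *ᵥ v = (Bᵀ *ᵥ u) ⬝ᵥ v := by
  rw [Matrix.dotProduct_mulVec, Matrix.mulVec_transpose]

lemma triple_dot (B P Q : Matrix I I k) (v w : I → k) :
    (P *ᵥ v) ⬝ᵥ B *ᵥ (Q *ᵥ w) = v ⬝ᵥ ((Pᵀ * B * Q) *ᵥ w) := by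
  rw [Matrix.mulVec_mulVec, dot_shift, Matrix.mulVec_mulVec, dotProduct_comm,
    dot_shift,
    show ((B * Q)ᵀ * P)ᵀ = Pᵀ * B * Q by
      rw [Matrix.transpose_mul, Matrix.transpose_transpose, ← mul_assoc]]
  exact dotProduct_comm _ _

lemma eq_zero_of_forall_dot (X : Matrix I I k) (h : ∀ u v : I → k, u ⬝ᵥ X *ᵥ v = 0) :
    X = 0 := by
  ext i j
  have := h (Pi.single i 1) (Pi.single j 1)
  simpa [Matrix.mulVec_single, single_dotProduct] using this

theorem field_lemma (h2 : (2 : k) = 0) (B : Matrix I I k) (hBs : Bᵀ = B) (hB2 : B * B = 1)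
    (A C : Matrix I I k)
    (hker : ∀ v : I → k, A *ᵥ v = 0 → C *ᵥ v = 0 → v = 0)
    (hsym : Aᵀ * B * C = Cᵀ * B * A) :
    ∃ S : Matrix I I k, B * Sᵀ * B = S ∧ IsUnit (A - S * C) := by
  classical
  -- the symplectic form on (I → k) × (I → k)
  set Ω : LinearMap.BilinForm k ((I → k) × (I → k)) := LinearMap.mk₂ k
      (fun x y => x.1 ⬝ᵥ B *ᵥ y.2 + x.2 ⬝ᵥ B *ᵥ y.1)
      (by intro m₁ m₂ nn; simp [add_dotProduct]; ring)
      (by intro c m nn; simp [smul_dotProduct]; ring)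
      (by intro m n₁ n₂; simp [Matrix.mulVec_add, dotProduct_add]; ring)
      (by intro c m nn; simp [Matrix.mulVec_smul, dotProduct_smul]; ring)
    with hΩ
  have Ωapp : ∀ x y : (I → k) × (I → k), Ω x y = x.1 ⬝ᵥ B *ᵥ y.2 + x.2 ⬝ᵥ B *ᵥ y.1 := by
    intro x y; rw [hΩ]; rfl
  have dsym : ∀ u v : I → k, u ⬝ᵥ B *ᵥ v = v ⬝ᵥ B *ᵥ u := by
    intro u v
    rw [dot_shift, hBs, dotProduct_comm]
  have halt : Ω.IsAlt := by
    intro x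
    rw [Ωapp, dsym, ← two_mul, h2, zero_mul]
  have hdot_cancel : ∀ u : I → k, (∀ w : I → k, u ⬝ᵥ B *ᵥ w = 0) → u = 0 := by
    intro u hu
    funext j
    have := hu (B *ᵥ Pi.single j 1)
    rwa [Matrix.mulVec_mulVec, hB2, Matrix.one_mulVec, dotProduct_single,
      mul_one] at this
  have hnd : Ω.Nondegenerate := by
    apply (LinearMap.IsRefl.nondegenerate_iff_separatingLeft halt.isRefl).2
    intro x hx
    have h1 : x.2 = 0 := by
      apply hdot_cancel
      intro w
      have := hx (w, 0)
      rwa [Ωapp, Matrix.mulVec_zero, dotProduct_zero, zero_add] at this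
    have h0 : x.1 = 0 := by
      apply hdot_cancel
      intro w
      have := hx (0, w)
      rw [Ωapp] at this
      simpa using this
    exact Prod.ext h0 h1
  -- the two Lagrangians
  set f : (I → k) →ₗ[k] (I → k) × (I → k) := (Matrix.mulVecLin A).prod (Matrix.mulVecLin C) with hf
  have hfapp : ∀ v : I → k, f v = (A *ᵥ v, C *ᵥ v) := fun v => rfl
  have hfker : ∀ v : I → k, f v = 0 → v = 0 := by
    intro v hv
    rw [hfapp, Prod.mk_eq_zero] at hv
    exact hker v hv.1 hv.2
  have hfinj : Function.Injective f := by
    rw [← LinearMap.ker_eq_bot, eq_bot_iff]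
    intro v hv
    exact hfker v hv
  set L1 : Submodule k ((I → k) × (I → k)) := LinearMap.range (LinearMap.inl k (I → k) (I → k)) with hL1
  set L2 : Submodule k ((I → k) × (I → k)) := LinearMap.range f with hL2
  have frW : finrank k ((I → k) × (I → k)) = finrank k (I → k) + finrank k (I → k) := Module.finrank_prod
  have h1d : 2 * finrank k L1 = finrank k ((I → k) × (I → k)) := by
    rw [hL1, LinearMap.finrank_range_of_inj LinearMap.inl_injective, frW]; ring
  have h2d : 2 * finrank k L2 = finrank k ((I → k) × (I → k)) := by
    rw [hL2, LinearMap.finrank_range_of_inj hfinj, frW]; ring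
  have h1o : L1 ≤ Ω.orthogonal L1 := by
    rintro x ⟨u, rfl⟩ y ⟨w, rfl⟩
    show Ω _ _ = 0
    rw [Ωapp]
    simp
  have h2o : L2 ≤ Ω.orthogonal L2 := by
    rintro x ⟨v, rfl⟩ y ⟨w, rfl⟩
    show Ω (f w) (f v) = 0
    rw [Ωapp, hfapp, hfapp]
    simp only
    rw [triple_dot, triple_dot, hsym, ← dotProduct_add, ← Matrix.add_mulVec,
      ← two_smul k (Cᵀ * B * A), h2]
    simp
  obtain ⟨M, hMo, hMd, hML1, hML2⟩ :=
    exists_transverse_lagrangian halt hnd h1o h1d h2o h2d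
  -- M is the graph of a matrix S
  have hfM : finrank k M = finrank k (I → k) := by omega
  set π2 : M →ₗ[k] (I → k) := (LinearMap.snd k (I → k) (I → k)).comp M.subtype with hπ2
  have hπ2app : ∀ x : M, π2 x = (x : (I → k) × (I → k)).2 := fun x => rfl
  have hπ2inj : Function.Injective π2 := by
    rw [← LinearMap.ker_eq_bot, eq_bot_iff]
    intro x hx
    have hx2 : (x : (I → k) × (I → k)).2 = 0 := hx
    have hxL1 : (x : (I → k) × (I → k)) ∈ L1 := ⟨(x : (I → k) × (I → k)).1, by
      rw [LinearMap.inl_apply]; exact (Prod.ext rfl hx2.symm)⟩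
    have hmem : (x : (I → k) × (I → k)) ∈ M ⊓ L1 := ⟨x.2, hxL1⟩
    rw [hML1] at hmem
    rw [Submodule.mem_bot]
    exact Subtype.ext ((Submodule.mem_bot k).1 hmem)
  have hπ2surj : Function.Surjective π2 := by
    rw [← LinearMap.range_eq_top]
    apply Submodule.eq_top_of_finrank_eq
    rw [LinearMap.finrank_range_of_inj hπ2inj, hfM]
  set eqv : M ≃ₗ[k] (I → k) := LinearEquiv.ofBijective π2 ⟨hπ2inj, hπ2surj⟩ with heqv
  set σ : (I → k) →ₗ[k] (I → k) :=
    (LinearMap.fst k (I → k) (I → k)).comp (M.subtype.comp (eqv.symm : (I → k) →ₗ[k] M)) with hσ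
  set S : Matrix I I k := LinearMap.toMatrix' σ with hS
  have hSapp : ∀ w : I → k, S *ᵥ w = σ w := by
    intro w
    rw [hS, ← Matrix.toLin'_apply, Matrix.toLin'_toMatrix']
  have hgraph : ∀ w : I → k, (S *ᵥ w, w) ∈ M := by
    intro w
    have h1 : ((eqv.symm w : M) : (I → k) × (I → k)).2 = w := eqv.apply_symm_apply w
    have h2 : S *ᵥ w = ((eqv.symm w : M) : (I → k) × (I → k)).1 := by rw [hSapp]; rfl
    have heq : (S *ᵥ w, w) = ((eqv.symm w : M) : (I → k) × (I → k)) :=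
      Prod.ext h2 h1.symm
    rw [heq]
    exact (eqv.symm w : M).2
  -- S is *-symmetric
  have hkey : Sᵀ * B + B * S = 0 := by
    apply eq_zero_of_forall_dot
    intro w w'
    have h0 : Ω (S *ᵥ w, w) (S *ᵥ w', w') = 0 := hMo (hgraph w') _ (hgraph w)
    rw [Ωapp] at h0
    simp only at h0
    have e1 : (S *ᵥ w) ⬝ᵥ B *ᵥ w' = w ⬝ᵥ ((Sᵀ * B) *ᵥ w') := by
      have := triple_dot B S 1 w w'
      rwa [Matrix.one_mulVec, mul_one] at this
    have e2 : w ⬝ᵥ B *ᵥ (S *ᵥ w') = w ⬝ᵥ ((B * S) *ᵥ w') := by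
      rw [Matrix.mulVec_mulVec]
    rw [e1, e2] at h0
    rwa [Matrix.add_mulVec, dotProduct_add]
  have hSsym : B * Sᵀ * B = S := by
    have h1 : Sᵀ * B = -(B * S) := eq_neg_of_add_eq_zero_left hkey
    have hneg : -S = S := by
      have hSS : S + S = 0 := by
        ext i j
        show S i j + S i j = 0
        rw [← two_mul, h2, zero_mul]
      exact neg_eq_of_add_eq_zero_left hSS
    calc B * Sᵀ * B = B * (Sᵀ * B) := by rw [mul_assoc]
      _ = B * -(B * S) := by rw [h1]
      _ = -(B * B * S) := by rw [mul_neg, mul_assoc]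
      _ = -S := by rw [hB2, one_mul]
      _ = S := hneg
  refine ⟨S, hSsym, ?_⟩
  rw [← Matrix.mulVec_injective_iff_isUnit]
  have hker' : ∀ v : I → k, (A - S * C) *ᵥ v = 0 → v = 0 := by
    intro v hv
    rw [Matrix.sub_mulVec, sub_eq_zero] at hv
    have hmem : (A *ᵥ v, C *ᵥ v) ∈ M := by
      rw [hv, ← Matrix.mulVec_mulVec]
      exact hgraph (C *ᵥ v)
    have hmem2 : (A *ᵥ v, C *ᵥ v) ∈ L2 := ⟨v, rfl⟩
    have : (A *ᵥ v, C *ᵥ v) ∈ M ⊓ L2 := ⟨hmem, hmem2⟩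
    rw [hML2] at this
    have h0 : (A *ᵥ v, C *ᵥ v) = (0 : (I → k) × (I → k)) := (Submodule.mem_bot k).1 this
    exact hker v (congrArg Prod.fst h0) (congrArg Prod.snd h0)
  intro v w hvw
  have : (A - S * C) *ᵥ (v - w) = 0 := by
    rw [Matrix.mulVec_sub, hvw, sub_self]
  have := hker' _ this
  rwa [sub_eq_zero] at this

end FieldCase

section Glue

open Matrix

variable (R : Type*) [CommRing R]

/-- the 2×2 matrix J -/
def JJ : Matrix (Fin 2) (Fin 2) R := !![0, 1; 1, 0]

lemma JJ_mul : JJ R * JJ R = 1 := by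
  rw [JJ, show (!![0, 1; 1, 0] : Matrix (Fin 2) (Fin 2) R) * !![0, 1; 1, 0]
    = !![1, 0; 0, 1] by simp [Matrix.mul_fin_two], ← Matrix.one_fin_two]

lemma JJ_t : (JJ R)ᵀ = JJ R := by
  rw [JJ]; ext i j; fin_cases i <;> fin_cases j <;> simp

variable (n : ℕ)

/-- the big B matrix : block diagonal with J blocks -/
def BB : Matrix (Fin n × Fin 2) (Fin n × Fin 2) R :=
  Matrix.compRingEquiv (Fin n) (Fin 2) R (Matrix.diagonal fun _ => JJ R)

lemma BB_apply (i j : Fin n) (p q : Fin 2) :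
    BB R n (i, p) (j, q) = if i = j then JJ R p q else 0 := by
  show (Matrix.diagonal (fun _ => JJ R) i j) p q = _
  rw [Matrix.diagonal_apply]
  by_cases h : i = j <;> simp [h]

lemma BB_mul : BB R n * BB R n = 1 := by
  rw [BB, ← _root_.map_mul, Matrix.diagonal_mul_diagonal]
  simp only [JJ_mul]
  rw [show (Matrix.diagonal fun _ : Fin n => (1 : Matrix (Fin 2) (Fin 2) R)) = 1 from
    Matrix.diagonal_one, _root_.map_one]

lemma BB_t : (BB R n)ᵀ = BB R n := by
  ext ⟨i, p⟩ ⟨j, q⟩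
  rw [Matrix.transpose_apply, BB_apply, BB_apply]
  by_cases h : i = j
  · subst h
    rw [if_pos rfl, if_pos rfl]
    exact congrFun (congrFun (JJ_t R) p) q
  · rw [if_neg h, if_neg (fun hh => h hh.symm)]

lemma star_transfer (a : Matrix (Fin n) (Fin n) (Matrix (Fin 2) (Fin 2) R)) :
    Matrix.compRingEquiv (Fin n) (Fin 2) R (invA19 a) =
      BB R n * (Matrix.compRingEquiv (Fin n) (Fin 2) R a)ᵀ * BB R n := by
  have h1 : invA19 a = (Matrix.diagonal fun _ : Fin n => JJ R) *
      (Matrix.of fun i j => (a j i)ᵀ) * (Matrix.diagonal fun _ : Fin n => JJ R) := by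
    ext i j
    rw [Matrix.mul_diagonal, Matrix.diagonal_mul]
    rfl
  rw [h1, _root_.map_mul, _root_.map_mul]
  have h2 : Matrix.compRingEquiv (Fin n) (Fin 2) R (Matrix.of fun i j => (a j i)ᵀ) =
      (Matrix.compRingEquiv (Fin n) (Fin 2) R a)ᵀ := by
    ext ⟨i, p⟩ ⟨j, q⟩
    rfl
  rw [h2]
  rfl

end Glue

section Lift

open Matrix

variable {R : Type*} [CommRing R] [IsLocalRing R] {n : ℕ}

lemma map_BB :
    (BB R n).map (IsLocalRing.residue R) = BB (IsLocalRing.ResidueField R) n := by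
  ext ⟨i, p⟩ ⟨j, q⟩
  rw [Matrix.map_apply, BB_apply, BB_apply]
  by_cases h : i = j
  · simp only [if_pos h]
    fin_cases p <;> fin_cases q <;> simp [JJ]
  · simp [if_neg h]

lemma isUnit_of_map_unit' {m : Matrix (Fin n × Fin 2) (Fin n × Fin 2) R}
    (h : IsUnit (m.map (IsLocalRing.residue R))) : IsUnit m := by
  rw [Matrix.isUnit_iff_isUnit_det] at h ⊢
  have hdet : (m.map (IsLocalRing.residue R)).det = IsLocalRing.residue R m.det := by
    have h0 := (RingHom.map_det (IsLocalRing.residue R) m).symm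
    rwa [RingHom.mapMatrix_apply] at h0
  rw [hdet] at h
  exact (IsLocalRing.residue_ne_zero_iff_isUnit _).1 h.ne_zero

end Lift

theorem stmt19 (R : Type*) [CommRing R] [IsLocalRing R] [CharP R 2] (n : ℕ)
    (a c : Matrix (Fin n) (Fin n) (Matrix (Fin 2) (Fin 2) R))
    (hcop : ∃ x y : Matrix (Fin n) (Fin n) (Matrix (Fin 2) (Fin 2) R),
      x * a + y * c = 1)
    (hsym : invA19 a * c = invA19 c * a) :
    ∃ s r : Matrix (Fin n) (Fin n) (Matrix (Fin 2) (Fin 2) R),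
      invA19 s = s ∧ IsUnit r ∧ a = s * c + r := by
  classical
  set kk := IsLocalRing.ResidueField R with hkk
  set φ := IsLocalRing.residue R with hφ
  set A := ((Matrix.compRingEquiv (Fin n) (Fin 2) R) a).map φ with hA
  set C := ((Matrix.compRingEquiv (Fin n) (Fin 2) R) c).map φ with hC
  -- characteristic 2 in the residue field
  have h2R : (2 : R) = 0 := by
    have := CharP.cast_eq_zero R 2
    simpa using this
  have h2 : (2 : kk) = 0 := by
    have : (2 : kk) = φ (2 : R) := (map_ofNat φ 2).symm
    rw [this, h2R, map_zero]
  -- coprimality over the residue field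
  have hker : ∀ v : (Fin n × Fin 2) → kk, A *ᵥ v = 0 → C *ᵥ v = 0 → v = 0 := by
    obtain ⟨x, y, hxy⟩ := hcop
    have h1 : (Matrix.compRingEquiv (Fin n) (Fin 2) R) x * (Matrix.compRingEquiv (Fin n) (Fin 2) R) a + (Matrix.compRingEquiv (Fin n) (Fin 2) R) y * (Matrix.compRingEquiv (Fin n) (Fin 2) R) c = 1 := by
      rw [← _root_.map_mul, ← _root_.map_mul, ← _root_.map_add, hxy, _root_.map_one]
    have h2' : (((Matrix.compRingEquiv (Fin n) (Fin 2) R) x).map φ) * A + (((Matrix.compRingEquiv (Fin n) (Fin 2) R) y).map φ) * C = 1 := by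
      rw [hA, hC, ← Matrix.map_mul, ← Matrix.map_mul, ← Matrix.map_add, h1,
        Matrix.map_one] <;> simp
    intro v hAv hCv
    calc v = (1 : Matrix (Fin n × Fin 2) (Fin n × Fin 2) kk) *ᵥ v :=
          (Matrix.one_mulVec v).symm
      _ = ((((Matrix.compRingEquiv (Fin n) (Fin 2) R) x).map φ) * A + (((Matrix.compRingEquiv (Fin n) (Fin 2) R) y).map φ) * C) *ᵥ v := by rw [h2']
      _ = (((Matrix.compRingEquiv (Fin n) (Fin 2) R) x).map φ) *ᵥ (A *ᵥ v) + (((Matrix.compRingEquiv (Fin n) (Fin 2) R) y).map φ) *ᵥ (C *ᵥ v) := by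
          rw [Matrix.add_mulVec, Matrix.mulVec_mulVec, Matrix.mulVec_mulVec]
      _ = 0 := by rw [hAv, hCv, Matrix.mulVec_zero, Matrix.mulVec_zero, add_zero]
  -- the symmetry hypothesis over the residue field
  have hRsym : ((Matrix.compRingEquiv (Fin n) (Fin 2) R) a)ᵀ * BB R n * ((Matrix.compRingEquiv (Fin n) (Fin 2) R) c) = ((Matrix.compRingEquiv (Fin n) (Fin 2) R) c)ᵀ * BB R n * ((Matrix.compRingEquiv (Fin n) (Fin 2) R) a) := by
    have h0 := congrArg (Matrix.compRingEquiv (Fin n) (Fin 2) R) hsym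
    rw [_root_.map_mul, _root_.map_mul, star_transfer, star_transfer] at h0
    have h1 := congrArg (fun M => BB R n * M) h0
    simp only [← mul_assoc] at h1
    rw [BB_mul, one_mul, one_mul] at h1
    exact h1
  have hksym : Aᵀ * BB kk n * C = Cᵀ * BB kk n * A := by
    have h0 := congrArg (fun M => M.map φ) hRsym
    simp only [Matrix.map_mul] at h0
    rw [Matrix.transpose_map, Matrix.transpose_map] at h0
    rw [hA, hC, ← map_BB]
    exact h0
  -- apply the field case
  obtain ⟨Sb, hSbsym, hSbunit⟩ := field_lemma h2 (BB kk n) (BB_t kk n) (BB_mul kk n)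
    A C hker hksym
  -- lift the symmetric matrix
  have hsurj : Function.Surjective φ := IsLocalRing.residue_surjective
  set ℓ : kk → R := Function.surjInv hsurj with hℓ
  have hℓφ : ∀ x : kk, φ (ℓ x) = x := fun x => Function.surjInv_eq hsurj x
  set Tb : Matrix (Fin n × Fin 2) (Fin n × Fin 2) kk := BB kk n * Sb with hTb
  have hTbt : Tbᵀ = Tb := by
    have h1 : Sbᵀ * BB kk n = BB kk n * Sb := by
      have := congrArg (fun M => BB kk n * M) hSbsym
      simp only [← mul_assoc] at this
      rw [BB_mul, one_mul] at this
      calc Sbᵀ * BB kk n = BB kk n * (BB kk n * Sbᵀ * BB kk n) := by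
            rw [← mul_assoc, ← mul_assoc, BB_mul, one_mul]
        _ = BB kk n * Sb := by rw [hSbsym]
    rw [hTb, Matrix.transpose_mul, BB_t, h1]
  set T : Matrix (Fin n × Fin 2) (Fin n × Fin 2) R :=
    Matrix.of fun i j => ℓ (Tb i j) with hT
  have hTmap : T.map φ = Tb := by
    ext i j
    rw [Matrix.map_apply]
    exact hℓφ _
  have hTt : Tᵀ = T := by
    ext i j
    rw [Matrix.transpose_apply]
    show ℓ (Tb j i) = ℓ (Tb i j)
    rw [show Tb j i = Tb i j from congrFun (congrFun hTbt i) j]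
  set Sbig : Matrix (Fin n × Fin 2) (Fin n × Fin 2) R := BB R n * T with hSbig
  have hSbigmap : Sbig.map φ = Sb := by
    rw [hSbig, Matrix.map_mul, hTmap, map_BB, hTb, ← mul_assoc, BB_mul, one_mul]
  have hSbigsym : BB R n * Sbigᵀ * BB R n = Sbig := by
    rw [hSbig, Matrix.transpose_mul, BB_t, hTt]
    calc BB R n * (T * BB R n) * BB R n = BB R n * T * (BB R n * BB R n) := by
          rw [mul_assoc, mul_assoc, mul_assoc]
      _ = BB R n * T := by rw [BB_mul, mul_one]
  set rbig : Matrix (Fin n × Fin 2) (Fin n × Fin 2) R := (Matrix.compRingEquiv (Fin n) (Fin 2) R) a - Sbig * (Matrix.compRingEquiv (Fin n) (Fin 2) R) c with hrbig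
  have hrmap : rbig.map φ = A - Sb * C := by
    rw [hrbig, Matrix.map_sub, Matrix.map_mul, hSbigmap, hA, hC] <;> simp
  have hrunit : IsUnit rbig := isUnit_of_map_unit' (by rw [hrmap]; exact hSbunit)
  refine ⟨(Matrix.compRingEquiv (Fin n) (Fin 2) R).symm Sbig, (Matrix.compRingEquiv (Fin n) (Fin 2) R).symm rbig, ?_, ?_, ?_⟩
  · apply (Matrix.compRingEquiv (Fin n) (Fin 2) R).injective
    rw [star_transfer, (Matrix.compRingEquiv (Fin n) (Fin 2) R).apply_symm_apply Sbig,
      hSbigsym]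
  · exact hrunit.map (Matrix.compRingEquiv (Fin n) (Fin 2) R).symm
  · apply (Matrix.compRingEquiv (Fin n) (Fin 2) R).injective
    rw [_root_.map_add, _root_.map_mul,
      (Matrix.compRingEquiv (Fin n) (Fin 2) R).apply_symm_apply Sbig,
      (Matrix.compRingEquiv (Fin n) (Fin 2) R).apply_symm_apply rbig, hrbig]
    abel
end
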